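/- arXiv:2502.01594 — 5 statements merged into one kernel-verified Lean document; each statement's English description precedes it below -/
import Mathlib

section
/- Let f : ℝ^d → ℝ be thrice differentiable whose Hessian is H-Lipschitz, let θ* satisfy ∇f(θ*) = 0 with ∇²f(θ*) positive semidefinite, and let ρ be a mean-zero probability measure on ℝ^d with E_{θ∼ρ}[θθᵀ] = c²·I for some c ≥ ‖θ*‖₂, c > 0. Set γ := 2√d·H·λ_max(∇²f(θ*))·M₃ + d·H²·M₄ and assume λ_max(EGOP(f)) + γ > 0. If L₁,…,L_d > 0 are constants with which f satisfies coordinate-wise smoothness on ℝ^d, then Σᵢ Lᵢ ≥ (d/(2c)) · max over ν ∈ {−1/√d, +1/√d}^d of (⟨ν, EGOP(f)·ν⟩ − γ)/√(λ_max(EGOP(f)) + γ). -/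
open MeasureTheory Matrix
open scoped RealInnerProductSpace

noncomputable section

variable {d : ℕ}

/-- Expected gradient outer product matrix of `f` w.r.t. measure `ρ`. -/
def EGOP (f : EuclideanSpace ℝ (Fin d) → ℝ) (ρ : Measure (EuclideanSpace ℝ (Fin d))) :
    Matrix (Fin d) (Fin d) ℝ :=
  fun i j => ∫ θ, gradient f θ i * gradient f θ j ∂ρ

/-- Hessian matrix of `f` at `θ`. -/
def hessMat (f : EuclideanSpace ℝ (Fin d) → ℝ) (θ : EuclideanSpace ℝ (Fin d)) :
    Matrix (Fin d) (Fin d) ℝ :=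
  fun i j => fderiv ℝ (gradient f) θ (EuclideanSpace.single j (1:ℝ)) i

/-- ℓ₂ operator (spectral) norm of a matrix. -/
def opNormM (M : Matrix (Fin d) (Fin d) ℝ) : ℝ :=
  ‖LinearMap.toContinuousLinearMap (Matrix.toEuclideanLin M)‖

/-- Largest eigenvalue (Rayleigh characterization) of a symmetric matrix. -/
def lambdaMax (M : Matrix (Fin d) (Fin d) ℝ) : ℝ :=
  sSup {r : ℝ | ∃ v : EuclideanSpace ℝ (Fin d), ‖v‖ = 1 ∧ r = ⟪v, Matrix.toEuclideanLin M v⟫}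

/-- The Hessian of `f` is `H`-Lipschitz. -/
def HessLipschitz (f : EuclideanSpace ℝ (Fin d) → ℝ) (H : ℝ) : Prop :=
  ∀ θ₁ θ₂ : EuclideanSpace ℝ (Fin d), opNormM (hessMat f θ₁ - hessMat f θ₂) ≤ H * ‖θ₁ - θ₂‖

/-- Coordinate-wise smoothness with constants `L` within the set `Θ`. -/
def CoordSmoothOn (f : EuclideanSpace ℝ (Fin d) → ℝ) (L : Fin d → ℝ)
    (Θ : Set (EuclideanSpace ℝ (Fin d))) : Prop :=
  ∀ θ₁ ∈ Θ, ∀ θ₂ ∈ Θ,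
    |f θ₁ - f θ₂ - ⟪gradient f θ₂, θ₁ - θ₂⟫| ≤ (1/2) * ∑ i, L i * (θ₁ i - θ₂ i)^2

/-- Coordinate-wise smoothness with constants `L` on all of ℝ^d. -/
def CoordSmooth (f : EuclideanSpace ℝ (Fin d) → ℝ) (L : Fin d → ℝ) : Prop :=
  CoordSmoothOn f L Set.univ

namespace EGOPAux

abbrev toCLM (M : Matrix (Fin d) (Fin d) ℝ) :
    EuclideanSpace ℝ (Fin d) →L[ℝ] EuclideanSpace ℝ (Fin d) :=
  LinearMap.toContinuousLinearMap (Matrix.toEuclideanLin M)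

lemma inner_eq_dot (M : Matrix (Fin d) (Fin d) ℝ) (v w : EuclideanSpace ℝ (Fin d)) :
    ⟪v, Matrix.toEuclideanLin M w⟫ = (fun i => v i) ⬝ᵥ M.mulVec (fun i => w i) := by
  rw [Matrix.toEuclideanLin_apply, PiLp.inner_apply]
  simp [RCLike.inner_apply, dotProduct, mulVec, mul_comm]

lemma rayleigh_bddAbove (M : Matrix (Fin d) (Fin d) ℝ) :
    BddAbove {r : ℝ | ∃ v : EuclideanSpace ℝ (Fin d), ‖v‖ = 1 ∧ r = ⟪v, Matrix.toEuclideanLin M v⟫} := by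
  refine ⟨opNormM M, ?_⟩
  rintro r ⟨v, hv, rfl⟩
  calc ⟪v, Matrix.toEuclideanLin M v⟫
      ≤ ‖v‖ * ‖(LinearMap.toContinuousLinearMap (Matrix.toEuclideanLin M)) v‖ := by
        simpa using real_inner_le_norm v (Matrix.toEuclideanLin M v)
    _ ≤ ‖v‖ * (opNormM M * ‖v‖) := by
        unfold opNormM
        have := ContinuousLinearMap.le_opNorm (LinearMap.toContinuousLinearMap (Matrix.toEuclideanLin M)) v
        have h0 : (0:ℝ) ≤ ‖v‖ := norm_nonneg _
        nlinarith [this]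
    _ = opNormM M := by rw [hv]; ring

lemma rayleigh_le_lambdaMax (M : Matrix (Fin d) (Fin d) ℝ) (v : EuclideanSpace ℝ (Fin d))
    (hv : ‖v‖ = 1) : ⟪v, Matrix.toEuclideanLin M v⟫ ≤ lambdaMax M :=
  le_csSup (rayleigh_bddAbove M) ⟨v, hv, rfl⟩

lemma lambdaMax_le (hd : 0 < d) (M : Matrix (Fin d) (Fin d) ℝ) (b : ℝ)
    (h : ∀ v : EuclideanSpace ℝ (Fin d), ‖v‖ = 1 → ⟪v, Matrix.toEuclideanLin M v⟫ ≤ b) :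
    lambdaMax M ≤ b := by
  apply csSup_le
  · exact ⟨_, ⟨EuclideanSpace.single ⟨0, hd⟩ (1:ℝ), by simp, rfl⟩⟩
  · rintro r ⟨v, hv, rfl⟩; exact h v hv

lemma quadform_le_lambdaMax (M : Matrix (Fin d) (Fin d) ℝ) (x : EuclideanSpace ℝ (Fin d)) :
    ⟪x, Matrix.toEuclideanLin M x⟫ ≤ lambdaMax M * ‖x‖ ^ 2 := by
  rcases eq_or_ne x 0 with rfl | hx
  · simp
  · have hnx : (0:ℝ) < ‖x‖ := norm_pos_iff.mpr hx
    have h1 : ‖(‖x‖⁻¹ • x)‖ = 1 := by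
      rw [norm_smul]; simp [abs_of_pos hnx, inv_mul_cancel₀ hnx.ne']
    have := rayleigh_le_lambdaMax M (‖x‖⁻¹ • x) h1
    rw [LinearMap.map_smul, real_inner_smul_left, real_inner_smul_right] at this
    have hs : (0:ℝ) < ‖x‖^2 := by positivity
    have h3 := mul_le_mul_of_nonneg_left this (le_of_lt hs)
    have h4 : ‖x‖^2 * (‖x‖⁻¹ * (‖x‖⁻¹ * ⟪x, Matrix.toEuclideanLin M x⟫)) =
        ⟪x, Matrix.toEuclideanLin M x⟫ := by
      field_simp
    rw [mul_comm (lambdaMax M)]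
    linarith

lemma toE_norm_sq (u : Fin d → ℝ) :
    ‖(WithLp.equiv 2 (Fin d → ℝ)).symm u‖ ^ 2 = ∑ i, u i ^ 2 := by
  rw [EuclideanSpace.norm_eq]
  rw [Real.sq_sqrt (by positivity)]
  simp [sq_abs]

lemma dot_quadform_le (M : Matrix (Fin d) (Fin d) ℝ) (u : Fin d → ℝ) :
    u ⬝ᵥ M.mulVec u ≤ lambdaMax M * (∑ i, u i ^ 2) := by
  have h := quadform_le_lambdaMax M ((WithLp.equiv 2 (Fin d → ℝ)).symm u)
  rw [inner_eq_dot, toE_norm_sq] at h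
  simpa using h

lemma dot_psd_nonneg {M : Matrix (Fin d) (Fin d) ℝ} (hM : M.PosSemidef) (u : Fin d → ℝ) :
    0 ≤ u ⬝ᵥ M.mulVec u := by
  have := hM.dotProduct_mulVec_nonneg u
  simpa using this

lemma lambdaMax_nonneg (hd : 0 < d) {M : Matrix (Fin d) (Fin d) ℝ} (hM : M.PosSemidef) :
    0 ≤ lambdaMax M := by
  have h1 : (0:ℝ) ≤ ⟪(EuclideanSpace.single (⟨0, hd⟩ : Fin d) (1:ℝ)),
      Matrix.toEuclideanLin M (EuclideanSpace.single ⟨0, hd⟩ (1:ℝ))⟫ := by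
    rw [inner_eq_dot]
    exact dot_psd_nonneg hM _
  exact le_trans h1 (rayleigh_le_lambdaMax M _ (by simp))

lemma transpose_eq_self {M : Matrix (Fin d) (Fin d) ℝ} (hM : M.IsHermitian) : Mᵀ = M := hM

lemma dot_self_eq_sum_sq (u : Fin d → ℝ) : u ⬝ᵥ u = ∑ i, u i ^ 2 := by
  simp [dotProduct, sq]

open scoped MatrixOrder in
lemma mulVec_dot_mulVec_le {M : Matrix (Fin d) (Fin d) ℝ} (hM : M.PosSemidef) (u : Fin d → ℝ) :
    M.mulVec u ⬝ᵥ M.mulVec u ≤ lambdaMax M * (u ⬝ᵥ M.mulVec u) := by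
  have hM0 : 0 ≤ M := Matrix.nonneg_iff_posSemidef.mpr hM
  set B := CFC.sqrt M with hBdef
  have hBB : B * B = M := CFC.sqrt_mul_sqrt_self M hM0
  have hBsym : Bᵀ = B :=
    transpose_eq_self (Matrix.nonneg_iff_posSemidef.mp (CFC.sqrt_nonneg M)).1
  have key : ∀ z : Fin d → ℝ,
      B.mulVec z ⬝ᵥ B.mulVec z = z ⬝ᵥ M.mulVec z := by
    intro z
    have h : B.mulVec z ⬝ᵥ B.mulVec z = z ⬝ᵥ (B * B).mulVec z := by
      rw [← Matrix.mulVec_mulVec, Matrix.dotProduct_mulVec z, ← Matrix.mulVec_transpose, hBsym]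
    rw [h, hBB]
  have h1 : M.mulVec u = B.mulVec (B.mulVec u) := by
    rw [Matrix.mulVec_mulVec, hBB]

  calc M.mulVec u ⬝ᵥ M.mulVec u
      = B.mulVec (B.mulVec u) ⬝ᵥ B.mulVec (B.mulVec u) := by rw [← h1]
    _ = B.mulVec u ⬝ᵥ M.mulVec (B.mulVec u) := key _
    _ ≤ lambdaMax M * (B.mulVec u ⬝ᵥ B.mulVec u) := by
        have := dot_quadform_le M (B.mulVec u)
        rwa [← dot_self_eq_sum_sq] at this
    _ = lambdaMax M * (u ⬝ᵥ M.mulVec u) := by rw [key u]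

lemma gradC2 {f : EuclideanSpace ℝ (Fin d) → ℝ} (hf : ContDiff ℝ 3 f) :
    ContDiff ℝ 2 (gradient f) := by
  have h1 : ContDiff ℝ 2 (fderiv ℝ f) := hf.fderiv_right (by norm_num)
  have h2 : gradient f = fun x => (InnerProductSpace.toDual ℝ _).symm (fderiv ℝ f x) := rfl
  rw [h2]
  exact (InnerProductSpace.toDual ℝ _).symm.contDiff.comp h1

lemma hasFDerivAt_gradient {f : EuclideanSpace ℝ (Fin d) → ℝ} (hf : ContDiff ℝ 3 f)
    (θ : EuclideanSpace ℝ (Fin d)) :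
    HasFDerivAt (gradient f) (toCLM (hessMat f θ)) θ := by
  have hd : DifferentiableAt ℝ (gradient f) θ :=
    ((gradC2 hf).differentiable (by norm_num)) θ
  suffices h : toCLM (hessMat f θ) = fderiv ℝ (gradient f) θ by
    rw [h]; exact hd.hasFDerivAt
  apply ContinuousLinearMap.coe_injective
  change (Matrix.toEuclideanLin (hessMat f θ) : _ →ₗ[ℝ] _) = _
  apply Module.Basis.ext (PiLp.basisFun 2 ℝ (Fin d))
  intro j
  have hb : (PiLp.basisFun 2 ℝ (Fin d)) j = EuclideanSpace.single j (1:ℝ) :=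
    PiLp.basisFun_apply _ _ _ _
  rw [hb]
  ext i
  rw [Matrix.toEuclideanLin_apply]
  show Matrix.mulVec (hessMat f θ) _ i = fderiv ℝ (gradient f) θ (EuclideanSpace.single j 1) i
  have : (EuclideanSpace.single j (1:ℝ)).ofLp = Pi.single j 1 := rfl
  rw [this, Matrix.mulVec_single]
  simp [hessMat]

lemma toCLM_sub (M N : Matrix (Fin d) (Fin d) ℝ) : toCLM (M - N) = toCLM M - toCLM N := by
  apply ContinuousLinearMap.coe_injective
  change (Matrix.toEuclideanLin (M - N) : _ →ₗ[ℝ] _) = _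
  rw [map_sub]
  rfl

lemma grad_taylor {f : EuclideanSpace ℝ (Fin d) → ℝ} {H : ℝ} (hf : ContDiff ℝ 3 f)
    (hH : HessLipschitz f H) (hH0 : 0 ≤ H) (θs θ : EuclideanSpace ℝ (Fin d))
    (hgrad : gradient f θs = 0) :
    ‖gradient f θ - toCLM (hessMat f θs) (θ - θs)‖ ≤ H * ‖θ - θs‖ ^ 2 := by
  have hseg : ∀ x ∈ segment ℝ θs θ, ‖x - θs‖ ≤ ‖θ - θs‖ := by
    rintro x ⟨a, b, ha, hb, hab, rfl⟩
    have h1 : a • θs + b • θ - θs = b • (θ - θs) := by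
      have ha1 : a = 1 - b := by linarith
      subst ha1
      module
    rw [h1, norm_smul, Real.norm_eq_abs, abs_of_nonneg hb]
    nlinarith [norm_nonneg (θ - θs)]
  have key := Convex.norm_image_sub_le_of_norm_hasFDerivWithin_le'
    (f := gradient f) (f' := fun x => toCLM (hessMat f x)) (φ := toCLM (hessMat f θs))
    (C := H * ‖θ - θs‖) (s := segment ℝ θs θ)
    (fun x _ => (hasFDerivAt_gradient hf x).hasFDerivWithinAt)
    (fun x hx => by
      rw [← toCLM_sub]
      calc opNormM (hessMat f x - hessMat f θs) ≤ H * ‖x - θs‖ := hH x θs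
        _ ≤ H * ‖θ - θs‖ := by
            have := hseg x hx
            nlinarith)
    (convex_segment _ _) (left_mem_segment ℝ θs θ) (right_mem_segment ℝ θs θ)
  rw [hgrad, sub_zero] at key
  calc ‖gradient f θ - toCLM (hessMat f θs) (θ - θs)‖ ≤ H * ‖θ - θs‖ * ‖θ - θs‖ := key
    _ = H * ‖θ - θs‖ ^ 2 := by ring

lemma quadform_le_of_smooth {f : EuclideanSpace ℝ (Fin d) → ℝ} {H : ℝ} {L : Fin d → ℝ}
    (hf : ContDiff ℝ 3 f) (hH : HessLipschitz f H) (hH0 : 0 ≤ H)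
    (θs : EuclideanSpace ℝ (Fin d)) (hgrad : gradient f θs = 0)
    (hsmooth : CoordSmooth f L) (ν' : EuclideanSpace ℝ (Fin d)) (hν1 : ‖ν'‖ = 1) :
    ⟪ν', Matrix.toEuclideanLin (hessMat f θs) ν'⟫ ≤ ∑ i, L i * (ν' i) ^ 2 := by
  set Q := ⟪ν', Matrix.toEuclideanLin (hessMat f θs) ν'⟫ with hQ
  set S := ∑ i, L i * (ν' i) ^ 2 with hS
  have key : ∀ t : ℝ, 0 < t → Q ≤ S + H * t := by
    intro t ht
    set θ₂ := θs + t • ν' with hθ₂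
    have hcoord : ∀ i, θ₂ i - θs i = t * ν' i := by
      intro i
      simp [hθ₂, PiLp.add_apply, PiLp.smul_apply, smul_eq_mul]
    have hsum : ∀ w : EuclideanSpace ℝ (Fin d),
        ∑ i, L i * (w i - θ₂ i)^2 = ∑ i, L i * (w i - θs i - t * ν' i)^2 := by
      intro w
      refine Finset.sum_congr rfl fun i _ => ?_
      rw [show w i - θ₂ i = w i - θs i - t * ν' i by rw [← hcoord i]; ring]
    have s1 := hsmooth θs (Set.mem_univ _) θ₂ (Set.mem_univ _)
    have s2 := hsmooth θ₂ (Set.mem_univ _) θs (Set.mem_univ _)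
    rw [hgrad] at s2
    simp only [inner_zero_left] at s2
    -- s2 : |f θ₂ - f θs - 0| ≤ ½ ∑ L i (θ₂ i - θs i)^2 = ½ t² S
    have hsum2 : ∑ i, L i * (θ₂ i - θs i)^2 = t^2 * S := by
      rw [hS, Finset.mul_sum]
      refine Finset.sum_congr rfl fun i _ => ?_
      rw [hcoord i]; ring
    have hsum1 : ∑ i, L i * (θs i - θ₂ i)^2 = t^2 * S := by
      rw [← hsum2]
      refine Finset.sum_congr rfl fun i _ => ?_
      rw [show θs i - θ₂ i = -(θ₂ i - θs i) by ring]
      ring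
    rw [hsum2] at s2
    rw [hsum1] at s1
    -- inner term in s1
    have hd1 : θs - θ₂ = -(t • ν') := by rw [hθ₂]; abel
    have hinner : ⟪gradient f θ₂, θs - θ₂⟫ = - (t * ⟪gradient f θ₂, ν'⟫) := by
      rw [hd1, inner_neg_right, real_inner_smul_right]
    rw [hinner] at s1
    -- Taylor lower bound on ⟪gradient f θ₂, ν'⟫
    have htay := grad_taylor hf hH hH0 θs θ₂ hgrad
    have hd2 : θ₂ - θs = t • ν' := by rw [hθ₂]; abel
    rw [hd2] at htay
    have hnorm : ‖t • ν'‖ = t := by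
      rw [norm_smul, Real.norm_eq_abs, abs_of_pos ht, hν1, mul_one]
    rw [hnorm] at htay
    have hlin : ⟪toCLM (hessMat f θs) (t • ν'), ν'⟫ = t * Q := by
      rw [ContinuousLinearMap.map_smul, real_inner_smul_left, hQ, real_inner_comm]
      rfl
    have hlow : t * Q - H * t^2 ≤ ⟪gradient f θ₂, ν'⟫ := by
      have h1 : ⟪gradient f θ₂ - toCLM (hessMat f θs) (t • ν'), ν'⟫ ≥ -(H * t^2) := by
        have := abs_real_inner_le_norm (gradient f θ₂ - toCLM (hessMat f θs) (t • ν')) ν'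
        rw [hν1, mul_one] at this
        have h2 := abs_le.mp (this.trans' (le_refl _)) |>.1
        linarith [h2.trans' (neg_le_neg htay)]
      rw [inner_sub_left, hlin] at h1
      linarith
    have habs1 := abs_le.mp s1
    have habs2 := abs_le.mp s2
    have hcomb : t * ⟪gradient f θ₂, ν'⟫ ≤ t^2 * S := by
      have e1 : f θs - f θ₂ - (-(t * ⟪gradient f θ₂, ν'⟫)) ≤ (1/2) * (t^2 * S) := habs1.2
      have e2 : -((1/2) * (t^2 * S)) ≤ f θ₂ - f θs - 0 := habs2.1
      linarith
    have hfinal : t * (t * Q - H * t^2) ≤ t^2 * S := le_trans (by nlinarith) hcomb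
    nlinarith [mul_pos ht ht, mul_pos (mul_pos ht ht) ht]
  -- conclude Q ≤ S
  refine le_of_forall_pos_le_add fun ε hε => ?_
  rcases eq_or_lt_of_le hH0 with hH | hH
  · have := key 1 one_pos
    rw [← hH] at this; linarith
  · have := key (ε / H) (div_pos hε hH)
    rw [mul_div_cancel₀ _ hH.ne'] at this
    linarith

section Prob
variable {f : EuclideanSpace ℝ (Fin d) → ℝ} {ρ : Measure (EuclideanSpace ℝ (Fin d))}
  [IsProbabilityMeasure ρ] {θs : EuclideanSpace ℝ (Fin d)} {c H : ℝ}

lemma cross_integrable (hmeanInt : ∀ i, Integrable (fun θ : EuclideanSpace ℝ (Fin d) => θ i) ρ)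
    (hcovInt : ∀ i j, Integrable (fun θ : EuclideanSpace ℝ (Fin d) => θ i * θ j) ρ)
    (i j : Fin d) :
    Integrable (fun θ : EuclideanSpace ℝ (Fin d) => (θ i - θs i) * (θ j - θs j)) ρ := by
  have : (fun θ : EuclideanSpace ℝ (Fin d) => (θ i - θs i) * (θ j - θs j)) =
      fun θ => θ i * θ j - θs j * θ i - θs i * θ j + θs i * θs j := by
    funext θ; ring
  rw [this]
  exact (((hcovInt i j).sub ((hmeanInt i).const_mul (θs j))).sub
    ((hmeanInt j).const_mul (θs i))).add (integrable_const _)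

lemma cross_integral (hmeanInt : ∀ i, Integrable (fun θ : EuclideanSpace ℝ (Fin d) => θ i) ρ)
    (hmean : ∀ i, ∫ θ, θ i ∂ρ = 0)
    (hcovInt : ∀ i j, Integrable (fun θ : EuclideanSpace ℝ (Fin d) => θ i * θ j) ρ)
    (hcov : ∀ i j, ∫ θ, θ i * θ j ∂ρ = if i = j then c ^ 2 else 0)
    (i j : Fin d) :
    ∫ θ, (θ i - θs i) * (θ j - θs j) ∂ρ = (if i = j then c ^ 2 else 0) + θs i * θs j := by
  have : (fun θ : EuclideanSpace ℝ (Fin d) => (θ i - θs i) * (θ j - θs j)) =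
      fun θ => θ i * θ j - θs j * θ i - θs i * θ j + θs i * θs j := by
    funext θ; ring
  rw [this]
  have I1 : Integrable (fun θ : EuclideanSpace ℝ (Fin d) => θs j * θ i) ρ :=
    (hmeanInt i).const_mul (θs j)
  have I2 : Integrable (fun θ : EuclideanSpace ℝ (Fin d) => θs i * θ j) ρ :=
    (hmeanInt j).const_mul (θs i)
  have I3 : Integrable (fun θ : EuclideanSpace ℝ (Fin d) => θ i * θ j - θs j * θ i) ρ :=
    (hcovInt i j).sub I1
  have I4 : Integrable
      (fun θ : EuclideanSpace ℝ (Fin d) => θ i * θ j - θs j * θ i - θs i * θ j) ρ := I3.sub I2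
  rw [integral_add I4 (integrable_const _), integral_sub I3 I2, integral_sub (hcovInt i j) I1,
    integral_const_mul, integral_const_mul, hmean i, hmean j, hcov i j, integral_const]
  simp

lemma linpart_sq_eq (w : Fin d → ℝ) (θ : EuclideanSpace ℝ (Fin d)) :
    (w ⬝ᵥ fun i => θ i - θs i) ^ 2 =
    ∑ i, ∑ j, (w i * w j) * ((θ i - θs i) * (θ j - θs j)) := by
  rw [sq, dotProduct, Finset.sum_mul_sum]
  refine Finset.sum_congr rfl fun i _ => Finset.sum_congr rfl fun j _ => by ring

lemma linpart_sq_integrable (hmeanInt : ∀ i, Integrable (fun θ : EuclideanSpace ℝ (Fin d) => θ i) ρ)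
    (hcovInt : ∀ i j, Integrable (fun θ : EuclideanSpace ℝ (Fin d) => θ i * θ j) ρ)
    (w : Fin d → ℝ) :
    Integrable (fun θ : EuclideanSpace ℝ (Fin d) => (w ⬝ᵥ fun i => θ i - θs i) ^ 2) ρ := by
  simp only [linpart_sq_eq (θs := θs) w]
  refine integrable_finset_sum _ fun i _ => integrable_finset_sum _ fun j _ => ?_
  exact (cross_integrable hmeanInt hcovInt i j).const_mul _

lemma linpart_sq_integral (hmeanInt : ∀ i, Integrable (fun θ : EuclideanSpace ℝ (Fin d) => θ i) ρ)
    (hmean : ∀ i, ∫ θ, θ i ∂ρ = 0)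
    (hcovInt : ∀ i j, Integrable (fun θ : EuclideanSpace ℝ (Fin d) => θ i * θ j) ρ)
    (hcov : ∀ i j, ∫ θ, θ i * θ j ∂ρ = if i = j then c ^ 2 else 0)
    (w : Fin d → ℝ) :
    ∫ θ, (w ⬝ᵥ fun i => θ i - θs i) ^ 2 ∂ρ =
      c ^ 2 * (w ⬝ᵥ w) + (w ⬝ᵥ fun i => θs i) ^ 2 := by
  simp only [linpart_sq_eq (θs := θs) w]
  rw [integral_finset_sum _ fun i _ => integrable_finset_sum _ fun j _ =>
    (cross_integrable hmeanInt hcovInt i j).const_mul _]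
  have h1 : ∀ i : Fin d, ∫ θ, ∑ j, (w i * w j) * ((θ i - θs i) * (θ j - θs j)) ∂ρ =
      ∑ j, (w i * w j) * ((if i = j then c ^ 2 else 0) + θs i * θs j) := by
    intro i
    rw [integral_finset_sum _ fun j _ => (cross_integrable hmeanInt hcovInt i j).const_mul _]
    refine Finset.sum_congr rfl fun j _ => ?_
    rw [integral_const_mul, cross_integral hmeanInt hmean hcovInt hcov i j]
  simp only [h1]
  have h2 : ∀ i : Fin d, ∑ j, (w i * w j) * ((if i = j then c ^ 2 else 0) + θs i * θs j)
      = w i * w i * c^2 + ∑ j, (w i * θs i) * (w j * θs j) := by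
    intro i
    rw [show (∑ j, (w i * w j) * ((if i = j then c ^ 2 else 0) + θs i * θs j)) =
      (∑ j, if i = j then w i * w j * c^2 else 0) + ∑ j, (w i * θs i) * (w j * θs j) by
        rw [← Finset.sum_add_distrib]
        refine Finset.sum_congr rfl fun j _ => ?_
        by_cases h : i = j <;> simp [h] <;> ring]
    rw [Finset.sum_ite_eq Finset.univ i (fun j => w i * w j * c^2)]
    simp
  simp only [h2]
  rw [Finset.sum_add_distrib, ← Finset.sum_mul_sum]
  have e1 : ∑ i, w i * w i * c^2 = c^2 * (w ⬝ᵥ w) := by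
    rw [dotProduct, Finset.mul_sum]
    exact Finset.sum_congr rfl fun i _ => by ring
  have e2 : (∑ i, w i * θs i) = (w ⬝ᵥ fun i => θs i) := rfl
  rw [e1, e2, ← sq]

lemma egop_quadform (hIntEGOP : ∀ i j, Integrable (fun θ => gradient f θ i * gradient f θ j) ρ)
    (u : Fin d → ℝ) :
    u ⬝ᵥ (EGOP f ρ).mulVec u = ∫ θ, (u ⬝ᵥ fun i => gradient f θ i) ^ 2 ∂ρ := by
  have expand : ∀ θ, (u ⬝ᵥ fun i => gradient f θ i) ^ 2 =
      ∑ i, ∑ j, (u i * u j) * (gradient f θ i * gradient f θ j) := by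
    intro θ
    rw [sq, dotProduct, Finset.sum_mul_sum]
    exact Finset.sum_congr rfl fun i _ => Finset.sum_congr rfl fun j _ => by ring
  simp only [expand]
  rw [integral_finset_sum _ fun i _ => integrable_finset_sum _ fun j _ =>
    (hIntEGOP i j).const_mul _]
  have h1 : ∀ i : Fin d, ∫ θ, ∑ j, (u i * u j) * (gradient f θ i * gradient f θ j) ∂ρ =
      ∑ j, (u i * u j) * (EGOP f ρ) i j := by
    intro i
    rw [integral_finset_sum _ fun j _ => (hIntEGOP i j).const_mul _]
    exact Finset.sum_congr rfl fun j _ => by rw [integral_const_mul]; rfl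
  simp only [h1]
  rw [dotProduct]
  refine Finset.sum_congr rfl fun i _ => ?_
  rw [Matrix.mulVec, dotProduct, Finset.mul_sum]
  exact Finset.sum_congr rfl fun j _ => by ring

lemma integral_sq_est {G gl : EuclideanSpace ℝ (Fin d) → ℝ} {H K : ℝ}
    (hH0 : 0 ≤ H) (hK0 : 0 ≤ K)
    (hGc : Continuous G) (hglc : Continuous gl)
    (hdiff : ∀ θ, |G θ - gl θ| ≤ H * ‖θ - θs‖ ^ 2)
    (hgl : ∀ θ, |gl θ| ≤ K * ‖θ - θs‖)
    (Igl2 : Integrable (fun θ => gl θ ^ 2) ρ)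
    (hM3 : Integrable (fun θ : EuclideanSpace ℝ (Fin d) => ‖θ - θs‖ ^ 3) ρ)
    (hM4 : Integrable (fun θ : EuclideanSpace ℝ (Fin d) => ‖θ - θs‖ ^ 4) ρ) :
    |∫ θ, G θ ^ 2 ∂ρ - ∫ θ, gl θ ^ 2 ∂ρ| ≤
      2 * (K * H * ∫ θ, ‖θ - θs‖ ^ 3 ∂ρ) + H ^ 2 * ∫ θ, ‖θ - θs‖ ^ 4 ∂ρ := by
  set h : EuclideanSpace ℝ (Fin d) → ℝ := fun θ => G θ - gl θ with hdef
  have hhc : Continuous h := hGc.sub hglc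
  have Ih2 : Integrable (fun θ => h θ ^ 2) ρ := by
    refine Integrable.mono' (hM4.const_mul (H ^ 2)) (hhc.pow 2).aestronglyMeasurable
      (Filter.Eventually.of_forall fun θ => ?_)
    rw [Real.norm_eq_abs, abs_of_nonneg (sq_nonneg _)]
    calc h θ ^ 2 ≤ (H * ‖θ - θs‖ ^ 2) ^ 2 := by
          have := hdiff θ
          nlinarith [abs_nonneg (h θ), neg_abs_le (h θ), le_abs_self (h θ)]
      _ = H ^ 2 * ‖θ - θs‖ ^ 4 := by ring
  have hglh : ∀ θ, |gl θ * h θ| ≤ K * H * ‖θ - θs‖ ^ 3 := by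
    intro θ
    rw [abs_mul]
    calc |gl θ| * |h θ| ≤ (K * ‖θ - θs‖) * (H * ‖θ - θs‖ ^ 2) := by
          have h1 := hgl θ
          have h2 := hdiff θ
          have := abs_nonneg (gl θ)
          have := abs_nonneg (h θ)
          nlinarith
      _ = K * H * ‖θ - θs‖ ^ 3 := by ring
  have Iglh : Integrable (fun θ => gl θ * h θ) ρ := by
    refine Integrable.mono' (hM3.const_mul (K * H)) (hglc.mul hhc).aestronglyMeasurable
      (Filter.Eventually.of_forall fun θ => ?_)
    rw [Real.norm_eq_abs]
    exact hglh θ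
  have hsplit : (fun θ => G θ ^ 2) =
      fun θ => gl θ ^ 2 + (2 * (gl θ * h θ) + h θ ^ 2) := by
    funext θ
    simp only [hdef]
    ring
  have I6 : Integrable (fun θ => 2 * (gl θ * h θ)) ρ := Iglh.const_mul 2
  have I5 : Integrable (fun θ => 2 * (gl θ * h θ) + h θ ^ 2) ρ := I6.add Ih2
  rw [hsplit, integral_add Igl2 I5, integral_add I6 Ih2, integral_const_mul]
  have hcross : |∫ θ, gl θ * h θ ∂ρ| ≤ K * H * ∫ θ, ‖θ - θs‖ ^ 3 ∂ρ := by
    calc |∫ θ, gl θ * h θ ∂ρ| ≤ ∫ θ, |gl θ * h θ| ∂ρ := by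
          simpa [Real.norm_eq_abs, abs_mul] using
            norm_integral_le_integral_norm (μ := ρ) (fun θ => gl θ * h θ)
      _ ≤ ∫ θ, K * H * ‖θ - θs‖ ^ 3 ∂ρ := by
          refine integral_mono Iglh.abs (hM3.const_mul _) fun θ => ?_
          simpa [abs_mul] using hglh θ
      _ = K * H * ∫ θ, ‖θ - θs‖ ^ 3 ∂ρ := integral_const_mul _ _
  have hsq1 : 0 ≤ ∫ θ, h θ ^ 2 ∂ρ := integral_nonneg fun θ => sq_nonneg _
  have hsq2 : ∫ θ, h θ ^ 2 ∂ρ ≤ H ^ 2 * ∫ θ, ‖θ - θs‖ ^ 4 ∂ρ := by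
    rw [← integral_const_mul]
    refine integral_mono Ih2 (hM4.const_mul _) fun θ => ?_
    have := hdiff θ
    nlinarith [abs_nonneg (h θ), le_abs_self (h θ), neg_abs_le (h θ)]
  rw [add_sub_cancel_left]
  have := abs_le.mp hcross
  rw [abs_le]
  constructor <;> nlinarith [this.1, this.2]

lemma toE_norm_one (u : Fin d → ℝ) (hu : ∑ i, u i ^ 2 = 1) :
    ‖(WithLp.equiv 2 (Fin d → ℝ)).symm u‖ = 1 := by
  have h := toE_norm_sq u
  rw [hu] at h
  exact (pow_left_inj₀ (norm_nonneg _) zero_le_one (two_ne_zero)).mp (by rw [h, one_pow])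

lemma norm_sq_eq (x : EuclideanSpace ℝ (Fin d)) : ‖x‖ ^ 2 = ∑ i, x i ^ 2 :=
  toE_norm_sq (fun i => x i)

lemma dot_mulVec_symm {M : Matrix (Fin d) (Fin d) ℝ} (hsym : Mᵀ = M) (u v : Fin d → ℝ) :
    u ⬝ᵥ M.mulVec v = M.mulVec u ⬝ᵥ v := by
  rw [Matrix.dotProduct_mulVec, ← Matrix.mulVec_transpose, hsym]

lemma est_main (hd : 0 < d) (hf : ContDiff ℝ 3 f) (hH : HessLipschitz f H) (hH0 : 0 ≤ H)
    (hgrad : gradient f θs = 0) (hpsd : (hessMat f θs).PosSemidef)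
    (hIntEGOP : ∀ i j, Integrable (fun θ => gradient f θ i * gradient f θ j) ρ)
    (hmeanInt : ∀ i, Integrable (fun θ : EuclideanSpace ℝ (Fin d) => θ i) ρ)
    (hmean : ∀ i, ∫ θ, θ i ∂ρ = 0)
    (hcovInt : ∀ i j, Integrable (fun θ : EuclideanSpace ℝ (Fin d) => θ i * θ j) ρ)
    (hcov : ∀ i j, ∫ θ, θ i * θ j ∂ρ = if i = j then c ^ 2 else 0)
    (hM3 : Integrable (fun θ : EuclideanSpace ℝ (Fin d) => ‖θ - θs‖ ^ 3) ρ)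
    (hM4 : Integrable (fun θ : EuclideanSpace ℝ (Fin d) => ‖θ - θs‖ ^ 4) ρ)
    (u : Fin d → ℝ) (hu : ∑ i, u i ^ 2 = 1) :
    |u ⬝ᵥ (EGOP f ρ).mulVec u -
        (c ^ 2 * ((hessMat f θs).mulVec u ⬝ᵥ (hessMat f θs).mulVec u) +
          ((hessMat f θs).mulVec u ⬝ᵥ fun i => θs i) ^ 2)| ≤
      2 * (lambdaMax (hessMat f θs) * H * ∫ θ, ‖θ - θs‖ ^ 3 ∂ρ) +
        H ^ 2 * ∫ θ, ‖θ - θs‖ ^ 4 ∂ρ := by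
  have hlamA : 0 ≤ lambdaMax (hessMat f θs) := lambdaMax_nonneg hd hpsd
  have hAsym : (hessMat f θs)ᵀ = hessMat f θs := transpose_eq_self hpsd.1
  have huE : ‖(WithLp.equiv 2 (Fin d → ℝ)).symm u‖ = 1 := toE_norm_one u hu
  have hGc : Continuous (fun θ => u ⬝ᵥ fun i => gradient f θ i) := by
    refine continuous_finset_sum _ fun i _ => ?_
    exact continuous_const.mul ((EuclideanSpace.proj i).continuous.comp (gradC2 hf).continuous)
  have hglc : Continuous
      (fun θ : EuclideanSpace ℝ (Fin d) => (hessMat f θs).mulVec u ⬝ᵥ fun i => θ i - θs i) := by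
    refine continuous_finset_sum _ fun i _ => ?_
    exact continuous_const.mul ((EuclideanSpace.proj i).continuous.sub continuous_const)
  have hww : (hessMat f θs).mulVec u ⬝ᵥ (hessMat f θs).mulVec u ≤
      lambdaMax (hessMat f θs) ^ 2 := by
    have h1 := mulVec_dot_mulVec_le hpsd u
    have h2 := dot_quadform_le (hessMat f θs) u
    rw [hu, mul_one] at h2
    have h3 := dot_psd_nonneg hpsd u
    nlinarith
  have hdiff : ∀ θ, |(fun θ => u ⬝ᵥ fun i => gradient f θ i) θ -
      (fun θ : EuclideanSpace ℝ (Fin d) =>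
        (hessMat f θs).mulVec u ⬝ᵥ fun i => θ i - θs i) θ| ≤ H * ‖θ - θs‖ ^ 2 := by
    intro θ
    simp only
    have hkey : (u ⬝ᵥ fun i => gradient f θ i) -
        ((hessMat f θs).mulVec u ⬝ᵥ fun i => θ i - θs i) =
        ⟪(WithLp.equiv 2 (Fin d → ℝ)).symm u,
          gradient f θ - toCLM (hessMat f θs) (θ - θs)⟫ := by
      rw [← dot_mulVec_symm hAsym u (fun i => θ i - θs i), PiLp.inner_apply]
      simp only [RCLike.inner_apply, starRingEnd_apply, star_trivial]
      rw [dotProduct, dotProduct, ← Finset.sum_sub_distrib]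
      refine Finset.sum_congr rfl fun i _ => ?_
      have e1 : ((WithLp.equiv 2 (Fin d → ℝ)).symm u) i = u i := rfl
      have e2 : (gradient f θ - toCLM (hessMat f θs) (θ - θs)) i =
          gradient f θ i - (toCLM (hessMat f θs) (θ - θs)) i := rfl
      have e3 : (toCLM (hessMat f θs) (θ - θs)) i =
          (hessMat f θs).mulVec (fun j => θ j - θs j) i := by
        show (Matrix.toEuclideanLin (hessMat f θs) (θ - θs)) i = _
        rw [Matrix.toEuclideanLin_apply]
        rfl
      rw [e1, e2, e3]
      ring
    rw [hkey]
    calc |⟪(WithLp.equiv 2 (Fin d → ℝ)).symm u,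
          gradient f θ - toCLM (hessMat f θs) (θ - θs)⟫| ≤
        ‖(WithLp.equiv 2 (Fin d → ℝ)).symm u‖ *
          ‖gradient f θ - toCLM (hessMat f θs) (θ - θs)‖ := abs_real_inner_le_norm _ _
      _ ≤ H * ‖θ - θs‖ ^ 2 := by
          rw [huE, one_mul]
          exact grad_taylor hf hH hH0 θs θ hgrad
  have hgl : ∀ θ : EuclideanSpace ℝ (Fin d),
      |(hessMat f θs).mulVec u ⬝ᵥ fun i => θ i - θs i| ≤
        lambdaMax (hessMat f θs) * ‖θ - θs‖ := by
    intro θ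
    have hcs := Finset.sum_mul_sq_le_sq_mul_sq Finset.univ ((hessMat f θs).mulVec u)
      (fun i => θ i - θs i)
    have hΔ : ∑ i, (θ i - θs i) ^ 2 = ‖θ - θs‖ ^ 2 := by
      rw [norm_sq_eq]
      exact Finset.sum_congr rfl fun i _ => by rw [PiLp.sub_apply]
    have hwsum : ∑ i, ((hessMat f θs).mulVec u) i ^ 2 ≤ lambdaMax (hessMat f θs) ^ 2 := by
      rw [← dot_self_eq_sum_sq]
      exact hww
    have h1 : ((hessMat f θs).mulVec u ⬝ᵥ fun i => θ i - θs i) ^ 2 ≤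
        (lambdaMax (hessMat f θs) * ‖θ - θs‖) ^ 2 := by
      calc ((hessMat f θs).mulVec u ⬝ᵥ fun i => θ i - θs i) ^ 2
          ≤ (∑ i, ((hessMat f θs).mulVec u) i ^ 2) * ∑ i, (θ i - θs i) ^ 2 := hcs
        _ ≤ lambdaMax (hessMat f θs) ^ 2 * ‖θ - θs‖ ^ 2 := by
            have h2 : (0:ℝ) ≤ ∑ i, (θ i - θs i) ^ 2 := by positivity
            have h3 : (0:ℝ) ≤ ∑ i, ((hessMat f θs).mulVec u) i ^ 2 := by positivity
            rw [← hΔ]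
            nlinarith
        _ = (lambdaMax (hessMat f θs) * ‖θ - θs‖) ^ 2 := by ring
    have h4 : 0 ≤ lambdaMax (hessMat f θs) * ‖θ - θs‖ := by positivity
    nlinarith [abs_nonneg ((hessMat f θs).mulVec u ⬝ᵥ fun i => θ i - θs i),
      sq_abs ((hessMat f θs).mulVec u ⬝ᵥ fun i => θ i - θs i)]
  rw [egop_quadform hIntEGOP u,
    ← linpart_sq_integral (θs := θs) hmeanInt hmean hcovInt hcov ((hessMat f θs).mulVec u)]
  exact integral_sq_est hH0 hlamA hGc hglc hdiff hgl
    (linpart_sq_integrable hmeanInt hcovInt _) hM3 hM4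

end Prob
end EGOPAux

set_option maxHeartbeats 2000000 in
/-- lower bound on the sum of coordinate-wise smoothness constants of `f` in terms
of quadratic forms of the EGOP at dense sign vectors: for every `ν ∈ {±1/√d}^d`,
`Σᵢ Lᵢ ≥ (d/(2c)) · (⟨ν, EGOP(f) ν⟩ − γ)/√(λ_max(EGOP(f)) + γ)`. -/
theorem sum_coord_smoothness_ge_sign_vector_quadratic_form
    (d : ℕ) (f : EuclideanSpace ℝ (Fin d) → ℝ) (H c : ℝ)
    (hf : ContDiff ℝ 3 f) (hH : HessLipschitz f H)
    (θs : EuclideanSpace ℝ (Fin d)) (hgrad : gradient f θs = 0)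
    (hpsd : (hessMat f θs).PosSemidef)
    (ρ : Measure (EuclideanSpace ℝ (Fin d))) [IsProbabilityMeasure ρ]
    (hIntEGOP : ∀ i j, Integrable (fun θ => gradient f θ i * gradient f θ j) ρ)
    (hmeanInt : ∀ i, Integrable (fun θ : EuclideanSpace ℝ (Fin d) => θ i) ρ)
    (hmean : ∀ i, ∫ θ, θ i ∂ρ = 0)
    (hcovInt : ∀ i j, Integrable (fun θ : EuclideanSpace ℝ (Fin d) => θ i * θ j) ρ)
    (hcov : ∀ i j, ∫ θ, θ i * θ j ∂ρ = if i = j then c ^ 2 else 0)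
    (hc : ‖θs‖ ≤ c) (hcpos : 0 < c)
    (hM3 : Integrable (fun θ : EuclideanSpace ℝ (Fin d) => ‖θ - θs‖ ^ 3) ρ)
    (hM4 : Integrable (fun θ : EuclideanSpace ℝ (Fin d) => ‖θ - θs‖ ^ 4) ρ)
    (γ : ℝ)
    (hγ : γ = 2 * Real.sqrt d * H * lambdaMax (hessMat f θs) * (∫ θ, ‖θ - θs‖ ^ 3 ∂ρ) +
      d * H ^ 2 * (∫ θ, ‖θ - θs‖ ^ 4 ∂ρ))
    (hpos : 0 < lambdaMax (EGOP f ρ) + γ)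
    (L : Fin d → ℝ) (hL : ∀ i, 0 < L i) (hsmooth : CoordSmooth f L)
    (ν : Fin d → ℝ) (hν : ∀ i, ν i = 1 / Real.sqrt d ∨ ν i = -(1 / Real.sqrt d)) :
    ∑ i, L i ≥
      (d / (2 * c)) *
        ((ν ⬝ᵥ (EGOP f ρ).mulVec ν - γ) / Real.sqrt (lambdaMax (EGOP f ρ) + γ)) := by
  rcases Nat.eq_zero_or_pos d with hd0 | hd
  · subst hd0
    simp
  -- notations
  have hc0 : c ≠ 0 := ne_of_gt hcpos
  have hlamEg : 0 ≤ lambdaMax (EGOP f ρ) + γ := le_of_lt hpos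
  have hR : 0 < Real.sqrt (lambdaMax (EGOP f ρ) + γ) := Real.sqrt_pos.mpr hpos
  -- H ≥ 0
  have hH0 : 0 ≤ H := by
    have h1 := hH (EuclideanSpace.single (⟨0, hd⟩ : Fin d) (1:ℝ)) 0
    have h2 : ‖EuclideanSpace.single (⟨0, hd⟩ : Fin d) (1:ℝ) - 0‖ = 1 := by
      rw [sub_zero]; simp
    rw [h2, mul_one] at h1
    exact le_trans (norm_nonneg _) h1
  have hlamA : 0 ≤ lambdaMax (hessMat f θs) := EGOPAux.lambdaMax_nonneg hd hpsd
  have hAsym : (hessMat f θs)ᵀ = hessMat f θs := EGOPAux.transpose_eq_self hpsd.1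
  have hM3nn : 0 ≤ ∫ θ, ‖θ - θs‖ ^ 3 ∂ρ := integral_nonneg fun θ => by positivity
  have hM4nn : 0 ≤ ∫ θ, ‖θ - θs‖ ^ 4 ∂ρ := integral_nonneg fun θ => by positivity
  have hd1 : (1:ℝ) ≤ (d:ℝ) := by exact_mod_cast hd
  have hsd1 : (1:ℝ) ≤ Real.sqrt d := by
    rw [show (1:ℝ) = Real.sqrt 1 by rw [Real.sqrt_one]]
    exact Real.sqrt_le_sqrt hd1
  have hγcmp : 2 * (lambdaMax (hessMat f θs) * H * ∫ θ, ‖θ - θs‖ ^ 3 ∂ρ) +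
      H ^ 2 * ∫ θ, ‖θ - θs‖ ^ 4 ∂ρ ≤ γ := by
    rw [hγ]
    have k1 : 0 ≤ H * lambdaMax (hessMat f θs) * ∫ θ, ‖θ - θs‖ ^ 3 ∂ρ := by positivity
    have k2 : 0 ≤ H ^ 2 * ∫ θ, ‖θ - θs‖ ^ 4 ∂ρ := by positivity
    nlinarith [mul_nonneg (sub_nonneg.mpr hsd1) k1, mul_nonneg (sub_nonneg.mpr hd1) k2]
  have hγ0 : 0 ≤ γ := le_trans (by positivity) hγcmp
  -- ν basic facts
  have hνsq : ∀ i, ν i ^ 2 = 1 / d := by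
    intro i
    have hsq : Real.sqrt d ^ 2 = (d:ℝ) := Real.sq_sqrt (by positivity)
    rcases hν i with h | h
    · rw [h, div_pow, one_pow, hsq]
    · rw [h, neg_sq, div_pow, one_pow, hsq]
  have hνsum : ∑ i, ν i ^ 2 = 1 := by
    simp only [hνsq]
    rw [Finset.sum_const, Finset.card_univ, Fintype.card_fin, nsmul_eq_mul]
    field_simp
  have hν'1 : ‖(WithLp.equiv 2 (Fin d → ℝ)).symm ν‖ = 1 := EGOPAux.toE_norm_one ν hνsum
  -- smoothness quadratic form bound
  set S := ∑ i, L i * ν i ^ 2 with hSdef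
  have hquad : ν ⬝ᵥ (hessMat f θs).mulVec ν ≤ S := by
    have h := EGOPAux.quadform_le_of_smooth hf hH hH0 θs hgrad hsmooth
      ((WithLp.equiv 2 (Fin d → ℝ)).symm ν) hν'1
    rw [EGOPAux.inner_eq_dot] at h
    exact h
  have hquad0 : 0 ≤ ν ⬝ᵥ (hessMat f θs).mulVec ν := EGOPAux.dot_psd_nonneg hpsd ν
  have hS0 : 0 ≤ S := le_trans hquad0 hquad
  -- Step 1 : lambdaMax of Hessian bounded
  have hstep1 : lambdaMax (hessMat f θs) ≤
      Real.sqrt (lambdaMax (EGOP f ρ) + γ) / c := by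
    refine EGOPAux.lambdaMax_le hd _ _ fun v hv => ?_
    have hu : ∑ i, v i ^ 2 = 1 := by
      rw [← EGOPAux.norm_sq_eq, hv, one_pow]
    have hest := EGOPAux.est_main hd hf hH hH0 hgrad hpsd hIntEGOP hmeanInt hmean hcovInt hcov
      hM3 hM4 (fun i => v i) hu
    have hray : (fun i => v i) ⬝ᵥ (EGOP f ρ).mulVec (fun i => v i) ≤ lambdaMax (EGOP f ρ) := by
      rw [← EGOPAux.inner_eq_dot]
      exact EGOPAux.rayleigh_le_lambdaMax _ v hv
    set w := (hessMat f θs).mulVec (fun i => v i) with hw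
    have habs := abs_le.mp hest
    have h1 : c ^ 2 * (w ⬝ᵥ w) ≤ lambdaMax (EGOP f ρ) + γ := by
      nlinarith [sq_nonneg (w ⬝ᵥ fun i => θs i), habs.1, hγcmp]
    have hq0 : 0 ≤ (fun i => v i) ⬝ᵥ (hessMat f θs).mulVec (fun i => v i) :=
      EGOPAux.dot_psd_nonneg hpsd _
    have hcs := Finset.sum_mul_sq_le_sq_mul_sq Finset.univ (fun i => v i) w
    have h2 : ((fun i => v i) ⬝ᵥ w) ^ 2 ≤ w ⬝ᵥ w := by
      calc ((fun i => v i) ⬝ᵥ w) ^ 2 ≤ (∑ i, v i ^ 2) * ∑ i, w i ^ 2 := hcs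
        _ = w ⬝ᵥ w := by rw [hu, one_mul, ← EGOPAux.dot_self_eq_sum_sq]
    have h3 : (c * ((fun i => v i) ⬝ᵥ w)) ^ 2 ≤ lambdaMax (EGOP f ρ) + γ := by
      calc (c * ((fun i => v i) ⬝ᵥ w)) ^ 2 = c ^ 2 * ((fun i => v i) ⬝ᵥ w) ^ 2 := by ring
        _ ≤ c ^ 2 * (w ⬝ᵥ w) := mul_le_mul_of_nonneg_left h2 (sq_nonneg c)
        _ ≤ lambdaMax (EGOP f ρ) + γ := h1
    have h4 : c * ((fun i => v i) ⬝ᵥ w) ≤ Real.sqrt (lambdaMax (EGOP f ρ) + γ) := by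
      rw [show Real.sqrt (lambdaMax (EGOP f ρ) + γ) =
        Real.sqrt ((Real.sqrt (lambdaMax (EGOP f ρ) + γ)) ^ 2) by
          rw [Real.sqrt_sq (le_of_lt hR)]]
      rw [show c * ((fun i => v i) ⬝ᵥ w) =
        Real.sqrt ((c * ((fun i => v i) ⬝ᵥ w)) ^ 2) by
          rw [Real.sqrt_sq (by positivity)]]
      apply Real.sqrt_le_sqrt
      rw [Real.sq_sqrt hlamEg]
      exact h3
    rw [EGOPAux.inner_eq_dot]
    rw [div_eq_inv_mul, ← mul_le_mul_iff_right₀ hcpos, ← mul_assoc, mul_inv_cancel₀ hc0, one_mul]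
    exact h4
  -- Step 2 : upper bound for the ν quadratic form
  have hstep2 : ν ⬝ᵥ (EGOP f ρ).mulVec ν - γ ≤
      2 * c * Real.sqrt (lambdaMax (EGOP f ρ) + γ) * S := by
    have hest := EGOPAux.est_main hd hf hH hH0 hgrad hpsd hIntEGOP hmeanInt hmean hcovInt hcov
      hM3 hM4 ν hνsum
    set w := (hessMat f θs).mulVec ν with hw
    have habs := abs_le.mp hest
    have hww0 : 0 ≤ w ⬝ᵥ w := by
      rw [EGOPAux.dot_self_eq_sum_sq]; positivity
    have hθs2 : (w ⬝ᵥ fun i => θs i) ^ 2 ≤ c ^ 2 * (w ⬝ᵥ w) := by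
      have hcs := Finset.sum_mul_sq_le_sq_mul_sq Finset.univ w (fun i => θs i)
      have hn : ∑ i, θs i ^ 2 = ‖θs‖ ^ 2 := (EGOPAux.norm_sq_eq θs).symm
      have hn2 : ‖θs‖ ^ 2 ≤ c ^ 2 := by nlinarith [norm_nonneg θs]
      calc (w ⬝ᵥ fun i => θs i) ^ 2 ≤ (∑ i, w i ^ 2) * ∑ i, θs i ^ 2 := hcs
        _ ≤ (w ⬝ᵥ w) * c ^ 2 := by
            rw [← EGOPAux.dot_self_eq_sum_sq, hn]
            nlinarith [hww0]
        _ = c ^ 2 * (w ⬝ᵥ w) := by ring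
    have hwwbound : w ⬝ᵥ w ≤ lambdaMax (hessMat f θs) * S := by
      calc w ⬝ᵥ w ≤ lambdaMax (hessMat f θs) * (ν ⬝ᵥ (hessMat f θs).mulVec ν) :=
            EGOPAux.mulVec_dot_mulVec_le hpsd ν
        _ ≤ lambdaMax (hessMat f θs) * S := by nlinarith
    have hlamAb : lambdaMax (hessMat f θs) * S ≤
        (Real.sqrt (lambdaMax (EGOP f ρ) + γ) / c) * S := by nlinarith
    have hfin : ν ⬝ᵥ (EGOP f ρ).mulVec ν - γ ≤ 2 * c ^ 2 * (w ⬝ᵥ w) := by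
      nlinarith [habs.2, hγcmp]
    calc ν ⬝ᵥ (EGOP f ρ).mulVec ν - γ ≤ 2 * c ^ 2 * (w ⬝ᵥ w) := hfin
      _ ≤ 2 * c ^ 2 * ((Real.sqrt (lambdaMax (EGOP f ρ) + γ) / c) * S) := by
          nlinarith [le_trans hwwbound hlamAb]
      _ = 2 * c * Real.sqrt (lambdaMax (EGOP f ρ) + γ) * S := by field_simp
  -- conclusion
  have hdS : (d:ℝ) * S = ∑ i, L i := by
    rw [hSdef, Finset.mul_sum]
    refine Finset.sum_congr rfl fun i _ => ?_
    rw [hνsq i]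
    field_simp
  rw [ge_iff_le, ← hdS]
  have hdiv : (ν ⬝ᵥ (EGOP f ρ).mulVec ν - γ) / Real.sqrt (lambdaMax (EGOP f ρ) + γ) ≤
      2 * c * S := by
    rw [div_le_iff₀ hR]
    calc ν ⬝ᵥ (EGOP f ρ).mulVec ν - γ ≤
        2 * c * Real.sqrt (lambdaMax (EGOP f ρ) + γ) * S := hstep2
      _ = 2 * c * S * Real.sqrt (lambdaMax (EGOP f ρ) + γ) := by ring
  calc (d:ℝ) / (2 * c) *
      ((ν ⬝ᵥ (EGOP f ρ).mulVec ν - γ) / Real.sqrt (lambdaMax (EGOP f ρ) + γ))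
      ≤ (d:ℝ) / (2 * c) * (2 * c * S) := by
        have hnn : 0 ≤ (d:ℝ) / (2 * c) := by positivity
        exact mul_le_mul_of_nonneg_left hdiv hnn
    _ = (d:ℝ) * S := by field_simp

end
end

section
/- Let f : ℝ^d → ℝ be thrice differentiable whose Hessian is H-Lipschitz, let θ* satisfy ∇f(θ*) = 0 with ∇²f(θ*) positive semidefinite, and let ρ be a mean-zero probability measure on ℝ^d with E_{θ∼ρ}[θθᵀ] = c²·I for some c ≥ ‖θ*‖₂, c > 0. Set γ := 2√d·H·λ_max(∇²f(θ*))·M₃ + d·H²·M₄ and assume λ_max(EGOP(f)) + γ > 0. If L₁,…,L_d > 0 are constants with which f satisfies coordinate-wise smoothness on ℝ^d, then for every eigenpair (λ_k, v_k) of EGOP(f) with ‖v_k‖₂ = 1, Σᵢ Lᵢ ≥ (d/(2c)) · (β_k·λ_k − γ)/√(λ_max(EGOP(f)) + γ), where β_k := ‖v_k‖₁²/d. -/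
open MeasureTheory Matrix
open scoped RealInnerProductSpace

noncomputable section

variable {d : ℕ}

/-! ### Auxiliary lemmas -/

theorem aux_innerSum (x y : EuclideanSpace ℝ (Fin d)) : ⟪x, y⟫ = ∑ i, x i * y i := by
  simp [PiLp.inner_apply, RCLike.inner_apply, mul_comm]

theorem aux_TLapp (M : Matrix (Fin d) (Fin d) ℝ) (v : EuclideanSpace ℝ (Fin d)) (i : Fin d) :
    Matrix.toEuclideanLin M v i = ∑ j, M i j * v j := by
  rw [Matrix.toEuclideanLin_apply]
  simp [Matrix.mulVec, dotProduct]

theorem aux_psd_inner_nonneg {M : Matrix (Fin d) (Fin d) ℝ} (hM : M.PosSemidef)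
    (x : EuclideanSpace ℝ (Fin d)) : 0 ≤ ⟪x, Matrix.toEuclideanLin M x⟫ := by
  have := hM.dotProduct_mulVec_nonneg (fun i => x i)
  rw [aux_innerSum]
  simp only [star_trivial] at this
  exact this

theorem aux_inner_TL_symm {M : Matrix (Fin d) (Fin d) ℝ} (hM : M.IsHermitian)
    (x y : EuclideanSpace ℝ (Fin d)) :
    ⟪x, Matrix.toEuclideanLin M y⟫ = ⟪y, Matrix.toEuclideanLin M x⟫ := by
  rw [aux_innerSum, aux_innerSum]
  simp only [aux_TLapp, Finset.mul_sum]
  rw [Finset.sum_comm]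
  refine Finset.sum_congr rfl fun i _ => Finset.sum_congr rfl fun j _ => ?_
  have : M j i = M i j := by
    conv_lhs => rw [← hM]
    rfl
  rw [this]; ring

theorem aux_rayleigh_bddAbove (M : Matrix (Fin d) (Fin d) ℝ) :
    BddAbove {r : ℝ | ∃ v : EuclideanSpace ℝ (Fin d), ‖v‖ = 1 ∧ r = ⟪v, Matrix.toEuclideanLin M v⟫} := by
  refine ⟨‖LinearMap.toContinuousLinearMap (Matrix.toEuclideanLin M)‖, ?_⟩
  rintro r ⟨v, hv, rfl⟩
  calc ⟪v, Matrix.toEuclideanLin M v⟫ ≤ ‖v‖ * ‖Matrix.toEuclideanLin M v‖ :=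
        real_inner_le_norm _ _
    _ = ‖(LinearMap.toContinuousLinearMap (Matrix.toEuclideanLin M)) v‖ := by rw [hv]; simp
    _ ≤ ‖LinearMap.toContinuousLinearMap (Matrix.toEuclideanLin M)‖ * ‖v‖ :=
        (LinearMap.toContinuousLinearMap (Matrix.toEuclideanLin M)).le_opNorm v
    _ = _ := by rw [hv, mul_one]

theorem aux_rayleigh_le_lambdaMax (M : Matrix (Fin d) (Fin d) ℝ) (v : EuclideanSpace ℝ (Fin d))
    (hv : ‖v‖ = 1) : ⟪v, Matrix.toEuclideanLin M v⟫ ≤ lambdaMax M :=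
  le_csSup (aux_rayleigh_bddAbove M) ⟨v, hv, rfl⟩

theorem aux_rayleigh_le_lambdaMax' (M : Matrix (Fin d) (Fin d) ℝ) (x : EuclideanSpace ℝ (Fin d)) :
    ⟪x, Matrix.toEuclideanLin M x⟫ ≤ lambdaMax M * ‖x‖ ^ 2 := by
  rcases eq_or_ne x 0 with rfl | hx
  · simp
  · have hnx : (0:ℝ) < ‖x‖ := norm_pos_iff.mpr hx
    have hu : ‖(‖x‖⁻¹ • x : EuclideanSpace ℝ (Fin d))‖ = 1 := by
      rw [norm_smul]; simp [abs_of_nonneg hnx.le, inv_mul_cancel₀ hnx.ne']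
    have h := aux_rayleigh_le_lambdaMax M _ hu
    rw [_root_.map_smul, real_inner_smul_left, real_inner_smul_right] at h
    have e : ⟪x, Matrix.toEuclideanLin M x⟫
        = ‖x‖ ^ 2 * (‖x‖⁻¹ * (‖x‖⁻¹ * ⟪x, Matrix.toEuclideanLin M x⟫)) := by
      field_simp
    rw [e]
    calc ‖x‖ ^ 2 * (‖x‖⁻¹ * (‖x‖⁻¹ * ⟪x, Matrix.toEuclideanLin M x⟫))
        ≤ ‖x‖ ^ 2 * lambdaMax M := by
          exact mul_le_mul_of_nonneg_left h (sq_nonneg _)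
      _ = lambdaMax M * ‖x‖ ^ 2 := by ring

theorem aux_lambdaMax_le (hd : 0 < d) (M : Matrix (Fin d) (Fin d) ℝ) (b : ℝ)
    (hb : ∀ v : EuclideanSpace ℝ (Fin d), ‖v‖ = 1 → ⟪v, Matrix.toEuclideanLin M v⟫ ≤ b) :
    lambdaMax M ≤ b := by
  apply csSup_le
  · exact ⟨_, ⟨EuclideanSpace.single ⟨0, hd⟩ (1:ℝ), by simp, rfl⟩⟩
  · rintro r ⟨v, hv, rfl⟩; exact hb v hv

theorem aux_cs_psd (M : Matrix (Fin d) (Fin d) ℝ)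
    (hsymm : ∀ x y : EuclideanSpace ℝ (Fin d),
      ⟪x, Matrix.toEuclideanLin M y⟫ = ⟪y, Matrix.toEuclideanLin M x⟫)
    (hpos : ∀ z : EuclideanSpace ℝ (Fin d), 0 ≤ ⟪z, Matrix.toEuclideanLin M z⟫)
    (x y : EuclideanSpace ℝ (Fin d)) :
    ⟪x, Matrix.toEuclideanLin M y⟫ ^ 2
      ≤ ⟪x, Matrix.toEuclideanLin M x⟫ * ⟪y, Matrix.toEuclideanLin M y⟫ := by
  have key : ∀ t : ℝ, 0 ≤ ⟪y, Matrix.toEuclideanLin M y⟫ * (t * t)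
      + (2 * ⟪x, Matrix.toEuclideanLin M y⟫) * t + ⟪x, Matrix.toEuclideanLin M x⟫ := by
    intro t
    have h := hpos (x + t • y)
    have hexp : ⟪x + t • y, Matrix.toEuclideanLin M (x + t • y)⟫
        = ⟪y, Matrix.toEuclideanLin M y⟫ * (t * t)
          + (2 * ⟪x, Matrix.toEuclideanLin M y⟫) * t + ⟪x, Matrix.toEuclideanLin M x⟫ := by
      rw [map_add, _root_.map_smul, inner_add_left, inner_add_right, inner_add_right,
        real_inner_smul_left, real_inner_smul_left, real_inner_smul_right,
        real_inner_smul_right, hsymm y x]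
      ring
    rw [hexp] at h
    exact h
  have hd := discrim_le_zero key
  rw [discrim] at hd
  nlinarith [hd]

theorem aux_norm_TA_sq_le (M : Matrix (Fin d) (Fin d) ℝ)
    (hsymm : ∀ x y : EuclideanSpace ℝ (Fin d),
      ⟪x, Matrix.toEuclideanLin M y⟫ = ⟪y, Matrix.toEuclideanLin M x⟫)
    (hpos : ∀ z : EuclideanSpace ℝ (Fin d), 0 ≤ ⟪z, Matrix.toEuclideanLin M z⟫)
    (x : EuclideanSpace ℝ (Fin d)) :
    ‖Matrix.toEuclideanLin M x‖ ^ 2 ≤ lambdaMax M * ⟪x, Matrix.toEuclideanLin M x⟫ := by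
  rcases eq_or_ne (‖Matrix.toEuclideanLin M x‖) 0 with h0 | h0
  · rw [h0]
    rcases lt_or_eq_of_le (hpos x) with hp | hp
    · have hray := aux_rayleigh_le_lambdaMax' M x
      have hq : 0 < lambdaMax M * ‖x‖ ^ 2 := lt_of_lt_of_le hp hray
      have hq2 : 0 < lambdaMax M := by
        by_contra hcon
        push_neg at hcon
        nlinarith [sq_nonneg ‖x‖]
      norm_num
      positivity
    · norm_num [← hp]
  · have e1 : ⟪Matrix.toEuclideanLin M x, Matrix.toEuclideanLin M x⟫
        = ‖Matrix.toEuclideanLin M x‖ ^ 2 := real_inner_self_eq_norm_sq _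
    have hcs := aux_cs_psd M hsymm hpos (Matrix.toEuclideanLin M x) x
    have hray := aux_rayleigh_le_lambdaMax' M (Matrix.toEuclideanLin M x)
    have hp := hpos x
    have hn : (0:ℝ) < ‖Matrix.toEuclideanLin M x‖ ^ 2 := by positivity
    nlinarith [mul_le_mul_of_nonneg_right hray hp, hcs, hn, e1]

theorem aux_gradContDiff (f : EuclideanSpace ℝ (Fin d) → ℝ) (hf : ContDiff ℝ 3 f) :
    ContDiff ℝ 2 (gradient f) := by
  have h3 : ContDiff ℝ ((2:ℕ) + 1 : ℕ) f := by exact_mod_cast hf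
  have h1 : ContDiff ℝ 2 (fderiv ℝ f) := (contDiff_succ_iff_fderiv.mp h3).2.2
  have : gradient f = fun x => (InnerProductSpace.toDual ℝ _).symm (fderiv ℝ f x) := rfl
  rw [this]
  exact (InnerProductSpace.toDual ℝ _).symm.contDiff.comp h1

theorem aux_hessHasDeriv (f : EuclideanSpace ℝ (Fin d) → ℝ) (hf : ContDiff ℝ 3 f)
    (x : EuclideanSpace ℝ (Fin d)) :
    HasFDerivAt (gradient f) (LinearMap.toContinuousLinearMap (Matrix.toEuclideanLin (hessMat f x))) x := by
  have hg : ContDiff ℝ 2 (gradient f) := aux_gradContDiff f hf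
  have hd : DifferentiableAt ℝ (gradient f) x := (hg.differentiable (by norm_num)).differentiableAt
  have hder := hd.hasFDerivAt
  convert hder using 1
  apply ContinuousLinearMap.ext
  intro u
  have hu : u = ∑ j, u j • EuclideanSpace.single j (1:ℝ) := by
    ext i; rw [WithLp.ofLp_sum, Finset.sum_apply]; simp [EuclideanSpace.single_apply]
  simp only [LinearMap.coe_toContinuousLinearMap']
  conv_rhs => rw [hu]
  rw [map_sum]
  ext i
  rw [WithLp.ofLp_sum, Finset.sum_apply, Matrix.toEuclideanLin_apply]
  rw [show (WithLp.toLp 2 (hessMat f x *ᵥ u.ofLp)).ofLp i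
      = ∑ j, hessMat f x i j * u j by simp [Matrix.mulVec, dotProduct]]
  refine Finset.sum_congr rfl fun j _ => ?_
  rw [_root_.map_smul, PiLp.smul_apply]
  unfold hessMat
  simp [mul_comm]

theorem aux_taylor_grad (f : EuclideanSpace ℝ (Fin d) → ℝ) (hf : ContDiff ℝ 3 f) (H : ℝ)
    (hH : HessLipschitz f H) (hH0 : 0 ≤ H) (θ₀ θ : EuclideanSpace ℝ (Fin d)) :
    ‖gradient f θ - gradient f θ₀ - Matrix.toEuclideanLin (hessMat f θ₀) (θ - θ₀)‖
      ≤ H * ‖θ - θ₀‖ ^ 2 := by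
  set T := fun x => LinearMap.toContinuousLinearMap (Matrix.toEuclideanLin (hessMat f x))
  set φ := fun x => gradient f x - T θ₀ x with hφ
  have hTsub : ∀ x, (T x - T θ₀ : EuclideanSpace ℝ (Fin d) →L[ℝ] EuclideanSpace ℝ (Fin d))
      = LinearMap.toContinuousLinearMap (Matrix.toEuclideanLin (hessMat f x - hessMat f θ₀)) := by
    intro x; ext u; simp [T, map_sub]
  have hder : ∀ x ∈ segment ℝ θ₀ θ, HasFDerivWithinAt φ (T x - T θ₀) (segment ℝ θ₀ θ) x := by
    intro x _
    exact (((aux_hessHasDeriv f hf x).sub ((T θ₀).hasFDerivAt)).hasFDerivWithinAt)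
  have hbound : ∀ x ∈ segment ℝ θ₀ θ, ‖T x - T θ₀‖ ≤ H * ‖θ - θ₀‖ := by
    intro x hx
    rw [hTsub]
    refine le_trans (hH x θ₀) ?_
    rcases hx with ⟨a, b, ha, hb, hab, hx⟩
    have hxs : x - θ₀ = b • (θ - θ₀) := by
      rw [← hx]; rw [show a = 1 - b by linarith]
      module
    have hn : ‖x - θ₀‖ = b * ‖θ - θ₀‖ := by rw [hxs, norm_smul]; simp [abs_of_nonneg hb]
    have hb1 : b ≤ 1 := by linarith
    have : ‖x - θ₀‖ ≤ ‖θ - θ₀‖ := by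
      rw [hn]; nlinarith [norm_nonneg (θ - θ₀)]
    nlinarith
  have key := (convex_segment θ₀ θ).norm_image_sub_le_of_norm_hasFDerivWithin_le
      hder hbound (left_mem_segment ℝ θ₀ θ) (right_mem_segment ℝ θ₀ θ)
  have hφd : φ θ - φ θ₀ = gradient f θ - gradient f θ₀ - Matrix.toEuclideanLin (hessMat f θ₀) (θ - θ₀) := by
    have h2 : Matrix.toEuclideanLin (hessMat f θ₀) (θ - θ₀)
        = T θ₀ θ - T θ₀ θ₀ := by
      simp [T, map_sub]
    rw [h2]
    simp only [φ]
    abel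
  rw [← hφd]
  calc ‖φ θ - φ θ₀‖ ≤ H * ‖θ - θ₀‖ * ‖θ - θ₀‖ := key
    _ = H * ‖θ - θ₀‖ ^ 2 := by ring

theorem aux_coordsmooth_rayleigh (f : EuclideanSpace ℝ (Fin d) → ℝ) (hf : ContDiff ℝ 3 f)
    (H : ℝ) (hH : HessLipschitz f H) (hH0 : 0 ≤ H)
    (L : Fin d → ℝ) (hsm : CoordSmooth f L) (θ u : EuclideanSpace ℝ (Fin d)) :
    ⟪u, Matrix.toEuclideanLin (hessMat f θ) u⟫ ≤ ∑ i, L i * (u i) ^ 2 := by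
  have key : ∀ t : ℝ, 0 < t →
      ⟪u, Matrix.toEuclideanLin (hessMat f θ) u⟫ ≤ ∑ i, L i * (u i) ^ 2 + H * t * ‖u‖ ^ 3 := by
    intro t ht
    have h1 := hsm (θ + t • u) (Set.mem_univ _) θ (Set.mem_univ _)
    have h2 := hsm θ (Set.mem_univ _) (θ + t • u) (Set.mem_univ _)
    have hsub : (θ + t • u) - θ = t • u := by abel
    have hsub2 : θ - (θ + t • u) = -(t • u) := by abel
    have hcoord : ∀ i, ((θ + t • u) i - θ i) = t * u i := by
      intro i
      simp [PiLp.add_apply, PiLp.smul_apply]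
    have hcoord2 : ∀ i, (θ i - (θ + t • u) i) = -(t * u i) := by
      intro i; rw [← hcoord i]; ring
    rw [hsub] at h1
    rw [hsub2] at h2
    have hsum1 : ∑ i, L i * ((θ + t • u) i - θ i)^2 = t^2 * ∑ i, L i * (u i)^2 := by
      rw [Finset.mul_sum]
      exact Finset.sum_congr rfl fun i _ => by rw [hcoord i]; ring
    have hsum2 : ∑ i, L i * (θ i - (θ + t • u) i)^2 = t^2 * ∑ i, L i * (u i)^2 := by
      rw [Finset.mul_sum]
      exact Finset.sum_congr rfl fun i _ => by rw [hcoord2 i]; ring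
    rw [hsum1] at h1
    rw [hsum2] at h2
    have hinner2 : ⟪gradient f (θ + t • u), -(t • u)⟫ = -⟪gradient f (θ + t • u), t • u⟫ := by
      rw [inner_neg_right]
    rw [hinner2] at h2
    have hcomb : ⟪gradient f (θ + t • u) - gradient f θ, t • u⟫ ≤ t^2 * ∑ i, L i * (u i)^2 := by
      rw [inner_sub_left]
      have a1 := abs_le.mp h1
      have a2 := abs_le.mp h2
      linarith [a1.2, a2.2]
    have htay := aux_taylor_grad f hf H hH hH0 θ (θ + t • u)
    rw [hsub] at htay
    have hlow : ⟪gradient f (θ + t • u) - gradient f θ, t • u⟫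
        ≥ ⟪Matrix.toEuclideanLin (hessMat f θ) (t • u), t • u⟫ - (H * ‖t • u‖ ^ 2) * ‖t • u‖ := by
      have hnb := mul_le_mul_of_nonneg_right htay (norm_nonneg (t • u))
      have hsplit : ⟪gradient f (θ + t • u) - gradient f θ, t • u⟫
          = ⟪Matrix.toEuclideanLin (hessMat f θ) (t • u), t • u⟫
            + ⟪gradient f (θ + t • u) - gradient f θ - Matrix.toEuclideanLin (hessMat f θ) (t • u), t • u⟫ := by
        rw [← inner_add_left]; congr 1; abel
      rw [hsplit]
      have hneg := neg_abs_le ⟪gradient f (θ + t • u) - gradient f θ - Matrix.toEuclideanLin (hessMat f θ) (t • u), t • u⟫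
      nlinarith [abs_real_inner_le_norm (gradient f (θ + t • u) - gradient f θ - Matrix.toEuclideanLin (hessMat f θ) (t • u)) (t • u), norm_nonneg (t • u)]
    have hquad : ⟪Matrix.toEuclideanLin (hessMat f θ) (t • u), t • u⟫
        = t^2 * ⟪u, Matrix.toEuclideanLin (hessMat f θ) u⟫ := by
      rw [_root_.map_smul, real_inner_smul_left, real_inner_smul_right, real_inner_comm]
      ring
    have hnorm : ‖t • u‖ = t * ‖u‖ := by rw [norm_smul]; simp [abs_of_pos ht]
    rw [hquad, hnorm] at hlow
    have hmain : t^2 * ⟪u, Matrix.toEuclideanLin (hessMat f θ) u⟫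
        ≤ t^2 * ∑ i, L i * (u i)^2 + H * t^3 * ‖u‖^3 := by nlinarith [hcomb, hlow]
    have ht2 : (0:ℝ) < t^2 := by positivity
    nlinarith [hmain, ht2, mul_pos ht ht2]
  refine le_of_forall_pos_le_add fun ε hε => ?_
  rcases eq_or_lt_of_le (show (0:ℝ) ≤ H * ‖u‖^3 by positivity) with h0 | h0
  · have := key 1 one_pos
    rw [show H * 1 * ‖u‖^3 = H * ‖u‖^3 by ring, ← h0] at this
    linarith
  · have ht : 0 < ε / (H * ‖u‖^3) := div_pos hε h0
    have := key _ ht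
    rw [show H * (ε / (H * ‖u‖^3)) * ‖u‖^3 = ε by have hH1 : H ≠ 0 := (by rintro rfl; simp at h0); have hu1 : ‖u‖ ≠ 0 := (by rintro hh; simp [hh] at h0); field_simp] at this
    linarith

section IntAux
variable (f : EuclideanSpace ℝ (Fin d) → ℝ) (ρ : Measure (EuclideanSpace ℝ (Fin d)))
  [IsProbabilityMeasure ρ]
  (hIntEGOP : ∀ i j, Integrable (fun θ => gradient f θ i * gradient f θ j) ρ)

theorem aux_prod_expand (x y : EuclideanSpace ℝ (Fin d)) (θ : EuclideanSpace ℝ (Fin d)) :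
    ⟪x, gradient f θ⟫ * ⟪y, gradient f θ⟫
      = ∑ i, ∑ j, (x i * y j) * (gradient f θ i * gradient f θ j) := by
  rw [aux_innerSum, aux_innerSum, Finset.sum_mul_sum]
  exact Finset.sum_congr rfl fun i _ => Finset.sum_congr rfl fun j _ => by ring

include hIntEGOP in
theorem aux_Gprod_integrable (x y : EuclideanSpace ℝ (Fin d)) :
    Integrable (fun θ => ⟪x, gradient f θ⟫ * ⟪y, gradient f θ⟫) ρ := by
  have : (fun θ => ⟪x, gradient f θ⟫ * ⟪y, gradient f θ⟫)
      = fun θ => ∑ i, ∑ j, (x i * y j) * (gradient f θ i * gradient f θ j) :=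
    funext fun θ => aux_prod_expand f x y θ
  rw [this]
  exact integrable_finset_sum _ fun i _ =>
    integrable_finset_sum _ fun j _ => (hIntEGOP i j).const_mul _

include hIntEGOP in
theorem aux_inner_TE (x y : EuclideanSpace ℝ (Fin d)) :
    ⟪x, Matrix.toEuclideanLin (EGOP f ρ) y⟫
      = ∫ θ, ⟪x, gradient f θ⟫ * ⟪y, gradient f θ⟫ ∂ρ := by
  rw [aux_innerSum]
  have h1 : ∀ i, x i * (Matrix.toEuclideanLin (EGOP f ρ) y) i
      = ∑ j, (x i * y j) * ∫ θ, gradient f θ i * gradient f θ j ∂ρ := by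
    intro i
    rw [aux_TLapp, Finset.mul_sum]
    exact Finset.sum_congr rfl fun j _ => by
      rw [show EGOP f ρ i j = ∫ θ, gradient f θ i * gradient f θ j ∂ρ from rfl]; ring
  calc ∑ i, x i * (Matrix.toEuclideanLin (EGOP f ρ) y) i
      = ∑ i, ∑ j, ∫ θ, (x i * y j) * (gradient f θ i * gradient f θ j) ∂ρ := by
        refine Finset.sum_congr rfl fun i _ => ?_
        rw [h1 i]
        exact Finset.sum_congr rfl fun j _ => (integral_const_mul _ _).symm
    _ = ∫ θ, ∑ i, ∑ j, (x i * y j) * (gradient f θ i * gradient f θ j) ∂ρ := by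
        rw [integral_finset_sum _ fun i _ => integrable_finset_sum _ fun j _ => (hIntEGOP i j).const_mul _]
        exact Finset.sum_congr rfl fun i _ =>
          (integral_finset_sum _ fun j _ => (hIntEGOP i j).const_mul _).symm
    _ = ∫ θ, ⟪x, gradient f θ⟫ * ⟪y, gradient f θ⟫ ∂ρ := by
        congr 1
        exact funext fun θ => (aux_prod_expand f x y θ).symm
end IntAux

section MomAux
variable (ρ : Measure (EuclideanSpace ℝ (Fin d))) [IsProbabilityMeasure ρ] (c : ℝ)
  (θs : EuclideanSpace ℝ (Fin d))
  (hmeanInt : ∀ i, Integrable (fun θ : EuclideanSpace ℝ (Fin d) => θ i) ρ)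
  (hmean : ∀ i, ∫ θ, θ i ∂ρ = 0)
  (hcovInt : ∀ i j, Integrable (fun θ : EuclideanSpace ℝ (Fin d) => θ i * θ j) ρ)
  (hcov : ∀ i j, ∫ θ, θ i * θ j ∂ρ = if i = j then c ^ 2 else 0)

theorem aux_msq_expand (w : EuclideanSpace ℝ (Fin d)) (θ : EuclideanSpace ℝ (Fin d)) :
    ⟪w, θ - θs⟫ ^ 2 = (∑ i, ∑ j, (w i * w j) * (θ i * θ j))
      - 2 * ⟪w, θs⟫ * (∑ i, w i * θ i) + ⟪w, θs⟫ ^ 2 := by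
  have h1 : ⟪w, θ - θs⟫ = (∑ i, w i * θ i) - ⟪w, θs⟫ := by
    rw [inner_sub_right, aux_innerSum]
  rw [h1]
  have h2 : (∑ i, w i * θ i) * (∑ j, w j * θ j) = ∑ i, ∑ j, (w i * w j) * (θ i * θ j) := by
    rw [Finset.sum_mul_sum]
    exact Finset.sum_congr rfl fun i _ => Finset.sum_congr rfl fun j _ => by ring
  nlinarith [h2]

include hmeanInt hcovInt in
theorem aux_msq_integrable (w : EuclideanSpace ℝ (Fin d)) :
    Integrable (fun θ : EuclideanSpace ℝ (Fin d) => ⟪w, θ - θs⟫ ^ 2) ρ := by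
  have : (fun θ : EuclideanSpace ℝ (Fin d) => ⟪w, θ - θs⟫ ^ 2)
      = fun θ => (∑ i, ∑ j, (w i * w j) * (θ i * θ j))
          - 2 * ⟪w, θs⟫ * (∑ i, w i * θ i) + ⟪w, θs⟫ ^ 2 :=
    funext fun θ => aux_msq_expand θs w θ
  rw [this]
  refine Integrable.add (Integrable.sub ?_ ?_) (integrable_const _)
  · exact integrable_finset_sum _ fun i _ => integrable_finset_sum _ fun j _ => (hcovInt i j).const_mul _
  · exact ((integrable_finset_sum _ fun i _ => (hmeanInt i).const_mul (w i))).const_mul _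

include hmeanInt hmean hcovInt hcov in
theorem aux_msq_integral (w : EuclideanSpace ℝ (Fin d)) :
    ∫ θ, ⟪w, θ - θs⟫ ^ 2 ∂ρ = c ^ 2 * ⟪w, w⟫ + ⟪w, θs⟫ ^ 2 := by
  have he : (fun θ : EuclideanSpace ℝ (Fin d) => ⟪w, θ - θs⟫ ^ 2)
      = fun θ => (∑ i, ∑ j, (w i * w j) * (θ i * θ j))
          - 2 * ⟪w, θs⟫ * (∑ i, w i * θ i) + ⟪w, θs⟫ ^ 2 :=
    funext fun θ => aux_msq_expand θs w θ
  rw [he]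
  have hint1 : Integrable (fun θ : EuclideanSpace ℝ (Fin d) => ∑ i, ∑ j, (w i * w j) * (θ i * θ j)) ρ :=
    integrable_finset_sum _ fun i _ => integrable_finset_sum _ fun j _ => (hcovInt i j).const_mul _
  have hint2 : Integrable (fun θ : EuclideanSpace ℝ (Fin d) => 2 * ⟪w, θs⟫ * (∑ i, w i * θ i)) ρ :=
    ((integrable_finset_sum _ fun i _ => (hmeanInt i).const_mul (w i))).const_mul _
  have hint12 : Integrable (fun θ : EuclideanSpace ℝ (Fin d) =>
      (∑ i, ∑ j, (w i * w j) * (θ i * θ j)) - 2 * ⟪w, θs⟫ * (∑ i, w i * θ i)) ρ :=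
    hint1.sub hint2
  rw [integral_add hint12 (integrable_const _), integral_sub hint1 hint2,
    integral_finset_sum _ (fun i _ => integrable_finset_sum _ fun j _ => (hcovInt i j).const_mul _),
    integral_const]
  have h1 : ∑ i, ∫ θ, (∑ j, (w i * w j) * (θ i * θ j)) ∂ρ = c^2 * ⟪w, w⟫ := by
    rw [aux_innerSum, Finset.mul_sum]
    refine Finset.sum_congr rfl fun i _ => ?_
    rw [integral_finset_sum _ fun j _ => (hcovInt i j).const_mul _]
    have : ∀ j, ∫ θ, (w i * w j) * (θ i * θ j) ∂ρ = (w i * w j) * (if i = j then c^2 else 0) := by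
      intro j; rw [integral_const_mul, hcov i j]
    rw [Finset.sum_congr rfl fun j _ => this j]
    rw [Finset.sum_congr rfl (fun j _ => by rw [mul_ite, mul_zero] :
      ∀ j ∈ Finset.univ, (w i * w j * if i = j then c^2 else 0)
        = if i = j then w i * w j * c^2 else 0)]
    rw [Finset.sum_ite_eq Finset.univ i (fun j => w i * w j * c^2)]
    simp [mul_comm, mul_assoc, mul_left_comm]
  have h2 : ∫ θ, 2 * ⟪w, θs⟫ * (∑ i, w i * θ i) ∂ρ = 0 := by
    rw [integral_const_mul, integral_finset_sum _ fun i _ => (hmeanInt i).const_mul (w i)]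
    have : ∀ i, ∫ θ, w i * θ i ∂ρ = 0 := fun i => by rw [integral_const_mul, hmean i, mul_zero]
    rw [Finset.sum_congr rfl fun i _ => this i]
    simp
  rw [h1, h2]
  simp
end MomAux

theorem aux_le_of_sq_le_sq {a b : ℝ} (h : a^2 ≤ b^2) (ha : 0 ≤ a) (hb : 0 ≤ b) : a ≤ b := by
  nlinarith

set_option maxHeartbeats 1000000 in
theorem sum_coord_smoothness_ge_of_eigenpair
    (d : ℕ) (f : EuclideanSpace ℝ (Fin d) → ℝ) (H c : ℝ)
    (hf : ContDiff ℝ 3 f) (hH : HessLipschitz f H)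
    (θs : EuclideanSpace ℝ (Fin d)) (hgrad : gradient f θs = 0)
    (hpsd : (hessMat f θs).PosSemidef)
    (ρ : Measure (EuclideanSpace ℝ (Fin d))) [IsProbabilityMeasure ρ]
    (hIntEGOP : ∀ i j, Integrable (fun θ => gradient f θ i * gradient f θ j) ρ)
    (hmeanInt : ∀ i, Integrable (fun θ : EuclideanSpace ℝ (Fin d) => θ i) ρ)
    (hmean : ∀ i, ∫ θ, θ i ∂ρ = 0)
    (hcovInt : ∀ i j, Integrable (fun θ : EuclideanSpace ℝ (Fin d) => θ i * θ j) ρ)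
    (hcov : ∀ i j, ∫ θ, θ i * θ j ∂ρ = if i = j then c ^ 2 else 0)
    (hc : ‖θs‖ ≤ c) (hcpos : 0 < c)
    (hM3 : Integrable (fun θ : EuclideanSpace ℝ (Fin d) => ‖θ - θs‖ ^ 3) ρ)
    (hM4 : Integrable (fun θ : EuclideanSpace ℝ (Fin d) => ‖θ - θs‖ ^ 4) ρ)
    (γ : ℝ)
    (hγ : γ = 2 * Real.sqrt d * H * lambdaMax (hessMat f θs) * (∫ θ, ‖θ - θs‖ ^ 3 ∂ρ) +
      d * H ^ 2 * (∫ θ, ‖θ - θs‖ ^ 4 ∂ρ))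
    (hpos : 0 < lambdaMax (EGOP f ρ) + γ)
    (L : Fin d → ℝ) (hL : ∀ i, 0 < L i) (hsmooth : CoordSmooth f L)
    (lam : ℝ) (v : EuclideanSpace ℝ (Fin d)) (hv : ‖v‖ = 1)
    (heig : Matrix.toEuclideanLin (EGOP f ρ) v = lam • v) :
    ∑ i, L i ≥
      (d / (2 * c)) *
        (((∑ i, |v i|) ^ 2 / d * lam - γ) / Real.sqrt (lambdaMax (EGOP f ρ) + γ)) := by
  -- basic positivity facts
  have hd : 0 < d := by
    by_contra hcon
    push_neg at hcon
    interval_cases d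
    · have : v = 0 := Subsingleton.elim v 0
      rw [this, norm_zero] at hv
      norm_num at hv
  have hd1 : (1:ℝ) ≤ d := by exact_mod_cast hd
  have hsd1 : (1:ℝ) ≤ Real.sqrt d := by
    rw [show (1:ℝ) = Real.sqrt 1 by simp]
    exact Real.sqrt_le_sqrt hd1
  have hsd0 : (0:ℝ) ≤ Real.sqrt d := Real.sqrt_nonneg _
  have hH0 : 0 ≤ H := by
    set e1 : EuclideanSpace ℝ (Fin d) := EuclideanSpace.single (⟨0, hd⟩ : Fin d) (1:ℝ) with he1
    have h := hH e1 0
    have hnorm : ‖e1 - (0 : EuclideanSpace ℝ (Fin d))‖ = 1 := by simp [he1]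
    rw [hnorm, mul_one] at h
    exact le_trans (norm_nonneg _) h
  set A := hessMat f θs with hA
  set Em := EGOP f ρ with hEm
  set lamA := lambdaMax A with hlamA
  set lamE := lambdaMax Em with hlamE
  set M3 := ∫ θ, ‖θ - θs‖ ^ 3 ∂ρ with hM3d
  set M4 := ∫ θ, ‖θ - θs‖ ^ 4 ∂ρ with hM4d
  have hAsymm : ∀ x y : EuclideanSpace ℝ (Fin d),
      ⟪x, Matrix.toEuclideanLin A y⟫ = ⟪y, Matrix.toEuclideanLin A x⟫ :=
    fun x y => aux_inner_TL_symm hpsd.1 x y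
  have hApos : ∀ z : EuclideanSpace ℝ (Fin d), 0 ≤ ⟪z, Matrix.toEuclideanLin A z⟫ :=
    fun z => aux_psd_inner_nonneg hpsd z
  have hlamA0 : 0 ≤ lamA := by
    set e1 : EuclideanSpace ℝ (Fin d) := EuclideanSpace.single (⟨0, hd⟩ : Fin d) (1:ℝ) with he1
    have h0 := hApos e1
    have h1 := aux_rayleigh_le_lambdaMax A e1 (by simp [he1])
    linarith
  have hM30 : 0 ≤ M3 := integral_nonneg fun θ => by positivity
  have hM40 : 0 ≤ M4 := integral_nonneg fun θ => by positivity
  have hγ0 : 0 ≤ γ := by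
    rw [hγ]
    have hdnn : (0:ℝ) ≤ (d:ℝ) := by positivity
    have e1 : (0:ℝ) ≤ 2 * Real.sqrt d * H * lamA * M3 :=
      mul_nonneg (mul_nonneg (mul_nonneg (by positivity) hH0) hlamA0) hM30
    have e2 : (0:ℝ) ≤ (d:ℝ) * H^2 * M4 := mul_nonneg (mul_nonneg hdnn (sq_nonneg H)) hM40
    linarith
  -- Taylor bound with base point θs
  have hr : ∀ θ, ‖gradient f θ - Matrix.toEuclideanLin A (θ - θs)‖ ≤ H * ‖θ - θs‖ ^ 2 := by
    intro θ
    have := aux_taylor_grad f hf H hH hH0 θs θ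
    rw [hgrad, sub_zero] at this
    exact this
  -- pointwise bounds
  have hpw1 : ∀ (u : EuclideanSpace ℝ (Fin d)) θ,
      |⟪u, gradient f θ⟫ - ⟪Matrix.toEuclideanLin A u, θ - θs⟫| ≤ ‖u‖ * (H * ‖θ - θs‖ ^ 2) := by
    intro u θ
    have hw : ⟪Matrix.toEuclideanLin A u, θ - θs⟫ = ⟪u, Matrix.toEuclideanLin A (θ - θs)⟫ := by
      rw [real_inner_comm]
      exact hAsymm (θ - θs) u
    rw [hw, ← inner_sub_right]
    calc |⟪u, gradient f θ - Matrix.toEuclideanLin A (θ - θs)⟫|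
        ≤ ‖u‖ * ‖gradient f θ - Matrix.toEuclideanLin A (θ - θs)‖ := abs_real_inner_le_norm _ _
      _ ≤ ‖u‖ * (H * ‖θ - θs‖ ^ 2) := mul_le_mul_of_nonneg_left (hr θ) (norm_nonneg u)
  have hpw2 : ∀ (u : EuclideanSpace ℝ (Fin d)) θ,
      |⟪Matrix.toEuclideanLin A u, θ - θs⟫| ≤ (lamA * ‖u‖) * ‖θ - θs‖ := by
    intro u θ
    have hAop : ‖Matrix.toEuclideanLin A u‖ ≤ lamA * ‖u‖ := by
      have h1 := aux_norm_TA_sq_le A hAsymm hApos u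
      have h2 := aux_rayleigh_le_lambdaMax' A u
      rw [← hlamA] at h1 h2
      have h2' := mul_le_mul_of_nonneg_left h2 hlamA0
      have h3 : ‖Matrix.toEuclideanLin A u‖ ^ 2 ≤ (lamA * ‖u‖)^2 := by
        have hid : (lamA * ‖u‖)^2 = lamA * (lamA * ‖u‖^2) := by ring
        rw [hid]
        exact le_trans h1 h2'
      exact aux_le_of_sq_le_sq h3 (norm_nonneg _) (mul_nonneg hlamA0 (norm_nonneg u))
    calc |⟪Matrix.toEuclideanLin A u, θ - θs⟫| ≤ ‖Matrix.toEuclideanLin A u‖ * ‖θ - θs‖ :=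
          abs_real_inner_le_norm _ _
      _ ≤ (lamA * ‖u‖) * ‖θ - θs‖ := mul_le_mul_of_nonneg_right hAop (norm_nonneg _)
  -- Step A : for every unit u, c² ‖TA u‖² ≤ lamE + γ
  have stepA : ∀ u : EuclideanSpace ℝ (Fin d), ‖u‖ = 1 →
      c^2 * ‖Matrix.toEuclideanLin A u‖^2 ≤ lamE + γ := by
    intro u hu
    set w := Matrix.toEuclideanLin A u with hwdef
    have hGint := aux_Gprod_integrable f ρ hIntEGOP u u
    have hmint := aux_msq_integrable ρ θs hmeanInt hcovInt w
    have hlhsint : Integrable (fun θ : EuclideanSpace ℝ (Fin d) =>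
        ⟪w, θ - θs⟫^2 - 2 * lamA * H * ‖θ - θs‖^3) ρ :=
      hmint.sub (hM3.const_mul _)
    have hptwise : ∀ θ, ⟪w, θ - θs⟫^2 - 2 * lamA * H * ‖θ - θs‖^3
        ≤ ⟪u, gradient f θ⟫ * ⟪u, gradient f θ⟫ := by
      intro θ
      have h1 := hpw1 u θ
      have h2 := hpw2 u θ
      rw [hu, one_mul] at h1
      rw [hu, mul_one] at h2
      have habs : |⟪w, θ - θs⟫ * (⟪u, gradient f θ⟫ - ⟪w, θ - θs⟫)|
          ≤ (lamA * ‖θ - θs‖) * (H * ‖θ - θs‖^2) := by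
        rw [abs_mul]
        exact mul_le_mul h2 h1 (abs_nonneg _) (mul_nonneg hlamA0 (norm_nonneg _))
      have hle := neg_abs_le (⟪w, θ - θs⟫ * (⟪u, gradient f θ⟫ - ⟪w, θ - θs⟫))
      have hbe : -(lamA * H * ‖θ - θs‖^3) ≤ ⟪w, θ - θs⟫ * (⟪u, gradient f θ⟫ - ⟪w, θ - θs⟫) := by
        have he2 : (lamA * ‖θ - θs‖) * (H * ‖θ - θs‖^2) = lamA * H * ‖θ - θs‖^3 := by ring
        rw [he2] at habs
        linarith
      have hid : ⟪u, gradient f θ⟫ * ⟪u, gradient f θ⟫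
          = ⟪w, θ - θs⟫^2 + 2 * (⟪w, θ - θs⟫ * (⟪u, gradient f θ⟫ - ⟪w, θ - θs⟫))
            + (⟪u, gradient f θ⟫ - ⟪w, θ - θs⟫)^2 := by ring
      rw [hid]
      have := sq_nonneg (⟪u, gradient f θ⟫ - ⟪w, θ - θs⟫)
      linarith
    have hmono := integral_mono hlhsint hGint hptwise
    rw [integral_sub hmint (hM3.const_mul _), integral_const_mul,
      aux_msq_integral ρ c θs hmeanInt hmean hcovInt hcov w] at hmono
    have hTE := aux_inner_TE f ρ hIntEGOP u u
    have hray := aux_rayleigh_le_lambdaMax Em u hu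
    rw [hTE] at hray
    have hww : ⟪w, w⟫ = ‖w‖^2 := real_inner_self_eq_norm_sq w
    rw [hww] at hmono
    have hγbound : 2 * lamA * H * M3 ≤ γ := by
      rw [hγ]
      have hdnn : (0:ℝ) ≤ (d:ℝ) := by positivity
      have P1 : (0:ℝ) ≤ (Real.sqrt d - 1) * (lamA * (H * M3)) :=
        mul_nonneg (sub_nonneg.mpr hsd1) (mul_nonneg hlamA0 (mul_nonneg hH0 hM30))
      have P2 : (0:ℝ) ≤ (d:ℝ) * H^2 * M4 := mul_nonneg (mul_nonneg hdnn (sq_nonneg H)) hM40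
      have hid : 2 * Real.sqrt d * H * lamA * M3 - 2 * lamA * H * M3
          = 2 * ((Real.sqrt d - 1) * (lamA * (H * M3))) := by ring
      linarith
    linarith [sq_nonneg ⟪w, θs⟫]
  -- Step B : lamA * c ≤ sqrt (lamE + γ)
  have hQ0 : 0 < Real.sqrt (lamE + γ) := Real.sqrt_pos.mpr hpos
  have hQsq : Real.sqrt (lamE + γ) ^ 2 = lamE + γ := Real.sq_sqrt hpos.le
  have stepB : lamA * c ≤ Real.sqrt (lamE + γ) := by
    have hb : ∀ u : EuclideanSpace ℝ (Fin d), ‖u‖ = 1 →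
        ⟪u, Matrix.toEuclideanLin A u⟫ ≤ Real.sqrt (lamE + γ) / c := by
      intro u hu
      have hA1 := stepA u hu
      have h2 : c * ‖Matrix.toEuclideanLin A u‖ ≤ Real.sqrt (lamE + γ) := by
        refine aux_le_of_sq_le_sq ?_ (mul_nonneg hcpos.le (norm_nonneg _)) hQ0.le
        rw [hQsq, mul_pow]
        exact hA1
      have h3 : ⟪u, Matrix.toEuclideanLin A u⟫ ≤ ‖Matrix.toEuclideanLin A u‖ := by
        calc ⟪u, Matrix.toEuclideanLin A u⟫ ≤ ‖u‖ * ‖Matrix.toEuclideanLin A u‖ :=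
              real_inner_le_norm _ _
          _ = ‖Matrix.toEuclideanLin A u‖ := by rw [hu, one_mul]
      rw [le_div_iff₀ hcpos]
      calc ⟪u, Matrix.toEuclideanLin A u⟫ * c ≤ ‖Matrix.toEuclideanLin A u‖ * c :=
            mul_le_mul_of_nonneg_right h3 hcpos.le
        _ = c * ‖Matrix.toEuclideanLin A u‖ := by ring
        _ ≤ Real.sqrt (lamE + γ) := h2
    have := aux_lambdaMax_le hd A _ hb
    rw [← hlamA] at this
    calc lamA * c ≤ (Real.sqrt (lamE + γ) / c) * c := mul_le_mul_of_nonneg_right this hcpos.le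
      _ = Real.sqrt (lamE + γ) := by field_simp
  -- the sign vector
  set s : EuclideanSpace ℝ (Fin d) :=
    (WithLp.equiv 2 (Fin d → ℝ)).symm (fun i => if v i < 0 then (-1:ℝ) else 1) with hs
  have hsapp : ∀ i, s i = if v i < 0 then (-1:ℝ) else 1 := fun i => rfl
  have hsv : ⟪s, v⟫ = ∑ i, |v i| := by
    rw [aux_innerSum]
    refine Finset.sum_congr rfl fun i _ => ?_
    rw [hsapp i]
    rcases lt_or_ge (v i) 0 with h | h
    · rw [if_pos h, abs_of_neg h]; ring
    · rw [if_neg (not_lt.mpr h), abs_of_nonneg h]; ring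
  have hss : ⟪s, s⟫ = (d:ℝ) := by
    rw [aux_innerSum]
    have : ∀ i, s i * s i = 1 := by
      intro i
      rw [hsapp i]
      rcases lt_or_ge (v i) 0 with h | h
      · rw [if_pos h]; ring
      · rw [if_neg (not_lt.mpr h)]; ring
    rw [Finset.sum_congr rfl fun i _ => this i]
    simp
  have hnss : ‖s‖^2 = (d:ℝ) := by rw [← real_inner_self_eq_norm_sq, hss]
  have hns : ‖s‖ = Real.sqrt d := by
    rw [← Real.sqrt_sq (norm_nonneg s), hnss]
  -- EGOP form facts
  have hEpos : ∀ z : EuclideanSpace ℝ (Fin d), 0 ≤ ⟪z, Matrix.toEuclideanLin Em z⟫ := by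
    intro z
    rw [aux_inner_TE f ρ hIntEGOP z z]
    exact integral_nonneg fun θ => mul_self_nonneg _
  have hEsymm : ∀ x y : EuclideanSpace ℝ (Fin d),
      ⟪x, Matrix.toEuclideanLin Em y⟫ = ⟪y, Matrix.toEuclideanLin Em x⟫ := by
    intro x y
    rw [aux_inner_TE f ρ hIntEGOP x y, aux_inner_TE f ρ hIntEGOP y x]
    congr 1
    exact funext fun θ => by ring
  have hBsv : ⟪s, Matrix.toEuclideanLin Em v⟫ = lam * (∑ i, |v i|) := by
    rw [heig, real_inner_smul_right, hsv]
  have hBvv : ⟪v, Matrix.toEuclideanLin Em v⟫ = lam := by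
    rw [heig, real_inner_smul_right, real_inner_self_eq_norm_sq, hv]
    norm_num
  have hcs := aux_cs_psd Em hEsymm hEpos s v
  rw [hBsv, hBvv] at hcs
  -- Step C : upper bound for B(s,s)
  set V := ∑ i, |v i| with hV
  have stepC : ⟪s, Matrix.toEuclideanLin Em s⟫
      ≤ 2 * c * Real.sqrt (lamE + γ) * (∑ i, L i) + d * γ := by
    set w := Matrix.toEuclideanLin A s with hwdef
    have hmint := aux_msq_integrable ρ θs hmeanInt hcovInt w
    have hrhsint : Integrable (fun θ : EuclideanSpace ℝ (Fin d) =>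
        ⟪w, θ - θs⟫^2 + 2 * (d:ℝ) * lamA * H * ‖θ - θs‖^3 + (d:ℝ) * H^2 * ‖θ - θs‖^4) ρ :=
      (hmint.add (hM3.const_mul _)).add (hM4.const_mul _)
    have hGint := aux_Gprod_integrable f ρ hIntEGOP s s
    have hptwise : ∀ θ, ⟪s, gradient f θ⟫ * ⟪s, gradient f θ⟫
        ≤ ⟪w, θ - θs⟫^2 + 2 * (d:ℝ) * lamA * H * ‖θ - θs‖^3 + (d:ℝ) * H^2 * ‖θ - θs‖^4 := by
      intro θ
      have h1 := hpw1 s θ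
      have h2 := hpw2 s θ
      rw [hns] at h1 h2
      have hsd : Real.sqrt d * Real.sqrt d = (d:ℝ) := Real.mul_self_sqrt (by positivity)
      have habs : |⟪w, θ - θs⟫ * (⟪s, gradient f θ⟫ - ⟪w, θ - θs⟫)|
          ≤ (lamA * Real.sqrt d * ‖θ - θs‖) * (Real.sqrt d * (H * ‖θ - θs‖^2)) := by
        rw [abs_mul]
        exact mul_le_mul h2 h1 (abs_nonneg _)
          (mul_nonneg (mul_nonneg hlamA0 hsd0) (norm_nonneg _))
      have habs2 : |⟪s, gradient f θ⟫ - ⟪w, θ - θs⟫| ≤ Real.sqrt d * (H * ‖θ - θs‖^2) := h1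
      have hsq : (⟪s, gradient f θ⟫ - ⟪w, θ - θs⟫)^2 ≤ (d:ℝ) * (H * ‖θ - θs‖^2)^2 := by
        have h5 := mul_self_le_mul_self (abs_nonneg (⟪s, gradient f θ⟫ - ⟪w, θ - θs⟫)) habs2
        have h6 : |⟪s, gradient f θ⟫ - ⟪w, θ - θs⟫| * |⟪s, gradient f θ⟫ - ⟪w, θ - θs⟫|
            = (⟪s, gradient f θ⟫ - ⟪w, θ - θs⟫)^2 := by rw [← abs_mul, abs_mul_self]; ring
        have h7 : Real.sqrt d * (H * ‖θ - θs‖^2) * (Real.sqrt d * (H * ‖θ - θs‖^2))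
            = (Real.sqrt d * Real.sqrt d) * (H * ‖θ - θs‖^2)^2 := by ring
        rw [h6, h7, hsd] at h5
        exact h5
      have hle := abs_le.mp habs
      have hbe2 : ⟪w, θ - θs⟫ * (⟪s, gradient f θ⟫ - ⟪w, θ - θs⟫)
          ≤ (d:ℝ) * (lamA * H * ‖θ - θs‖^3) := by
        have he2 : (lamA * Real.sqrt d * ‖θ - θs‖) * (Real.sqrt d * (H * ‖θ - θs‖^2))
            = (Real.sqrt d * Real.sqrt d) * (lamA * H * ‖θ - θs‖^3) := by ring
        rw [he2, hsd] at hle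
        linarith [hle.2]
      have hid : ⟪s, gradient f θ⟫ * ⟪s, gradient f θ⟫
          = ⟪w, θ - θs⟫^2 + 2 * (⟪w, θ - θs⟫ * (⟪s, gradient f θ⟫ - ⟪w, θ - θs⟫))
            + (⟪s, gradient f θ⟫ - ⟪w, θ - θs⟫)^2 := by ring
      rw [hid]
      have hid2 : (d:ℝ) * (H * ‖θ - θs‖^2)^2 = (d:ℝ) * H^2 * ‖θ - θs‖^4 := by ring
      rw [hid2] at hsq
      have hid3 : 2 * ((d:ℝ) * (lamA * H * ‖θ - θs‖^3)) = 2 * (d:ℝ) * lamA * H * ‖θ - θs‖^3 := by ring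
      linarith
    have hmono := integral_mono hGint hrhsint hptwise
    have hint12 : Integrable (fun θ : EuclideanSpace ℝ (Fin d) =>
        ⟪w, θ - θs⟫^2 + 2 * (d:ℝ) * lamA * H * ‖θ - θs‖^3) ρ := hmint.add (hM3.const_mul _)
    rw [integral_add hint12 (hM4.const_mul _), integral_add hmint (hM3.const_mul _),
      integral_const_mul, integral_const_mul,
      aux_msq_integral ρ c θs hmeanInt hmean hcovInt hcov w] at hmono
    have hTE := aux_inner_TE f ρ hIntEGOP s s
    rw [← hTE] at hmono
    -- bound the main term
    have hcross : ⟪w, θs⟫^2 ≤ c^2 * ‖w‖^2 := by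
      have h1 : |⟪w, θs⟫| ≤ ‖w‖ * ‖θs‖ := abs_real_inner_le_norm _ _
      have h2 : ‖w‖ * ‖θs‖ ≤ ‖w‖ * c := mul_le_mul_of_nonneg_left hc (norm_nonneg w)
      have h3 := mul_self_le_mul_self (abs_nonneg ⟪w, θs⟫) (le_trans h1 h2)
      have h4 : |⟪w, θs⟫| * |⟪w, θs⟫| = ⟪w, θs⟫^2 := by rw [← abs_mul, abs_mul_self]; ring
      have h5 : ‖w‖ * c * (‖w‖ * c) = c^2 * ‖w‖^2 := by ring
      rw [h4, h5] at h3
      exact h3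
    have hwsq : ‖w‖^2 ≤ lamA * (∑ i, L i) := by
      have h1 := aux_norm_TA_sq_le A hAsymm hApos s
      have h2 : ⟪s, Matrix.toEuclideanLin A s⟫ ≤ ∑ i, L i * (s i)^2 :=
        aux_coordsmooth_rayleigh f hf H hH hH0 L hsmooth θs s
      have h3 : ∑ i, L i * (s i)^2 = ∑ i, L i := by
        refine Finset.sum_congr rfl fun i _ => ?_
        rw [hsapp i]
        rcases lt_or_ge (v i) 0 with h | h
        · rw [if_pos h]; ring
        · rw [if_neg (not_lt.mpr h)]; ring
      rw [h3] at h2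
      rw [← hlamA] at h1
      calc ‖w‖^2 ≤ lamA * ⟪s, Matrix.toEuclideanLin A s⟫ := h1
        _ ≤ lamA * (∑ i, L i) := mul_le_mul_of_nonneg_left h2 hlamA0
    have hLsum0 : 0 ≤ ∑ i, L i := Finset.sum_nonneg fun i _ => (hL i).le
    have hmain : c^2 * ⟪w, w⟫ + ⟪w, θs⟫^2 ≤ 2 * c * Real.sqrt (lamE + γ) * (∑ i, L i) := by
      rw [real_inner_self_eq_norm_sq]
      have h4 : c^2 * ‖w‖^2 + ⟪w, θs⟫^2 ≤ 2 * c^2 * ‖w‖^2 := by linarith [hcross]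
      have h5 : 2 * c^2 * ‖w‖^2 ≤ 2 * c^2 * (lamA * (∑ i, L i)) := by
        have := mul_le_mul_of_nonneg_left hwsq (by positivity : (0:ℝ) ≤ 2 * c^2)
        linarith
      have h6 : 2 * c^2 * (lamA * (∑ i, L i)) ≤ 2 * c * Real.sqrt (lamE + γ) * (∑ i, L i) := by
        have h7 : c * (lamA * c) ≤ c * Real.sqrt (lamE + γ) :=
          mul_le_mul_of_nonneg_left stepB hcpos.le
        have h8 := mul_le_mul_of_nonneg_right h7 hLsum0
        have hid : 2 * c^2 * (lamA * (∑ i, L i)) = 2 * (c * (lamA * c) * (∑ i, L i)) := by ring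
        have hid2 : 2 * c * Real.sqrt (lamE + γ) * (∑ i, L i)
            = 2 * (c * Real.sqrt (lamE + γ) * (∑ i, L i)) := by ring
        rw [hid, hid2]
        linarith
      linarith
    have herr : 2 * (d:ℝ) * lamA * H * M3 + (d:ℝ) * H^2 * M4 ≤ d * γ := by
      rw [hγ]
      have hdnn : (0:ℝ) ≤ (d:ℝ) := by positivity
      have P1 : (0:ℝ) ≤ (Real.sqrt d - 1) * ((d:ℝ) * (lamA * (H * M3))) :=
        mul_nonneg (sub_nonneg.mpr hsd1)
          (mul_nonneg hdnn (mul_nonneg hlamA0 (mul_nonneg hH0 hM30)))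
      have P2 : (0:ℝ) ≤ ((d:ℝ) - 1) * ((d:ℝ) * (H^2 * M4)) :=
        mul_nonneg (sub_nonneg.mpr hd1) (mul_nonneg hdnn (mul_nonneg (sq_nonneg H) hM40))
      have hid : (d:ℝ) * (2 * Real.sqrt d * H * lamA * M3 + (d:ℝ) * H^2 * M4)
          - (2 * (d:ℝ) * lamA * H * M3 + (d:ℝ) * H^2 * M4)
          = 2 * ((Real.sqrt d - 1) * ((d:ℝ) * (lamA * (H * M3))))
            + ((d:ℝ) - 1) * ((d:ℝ) * (H^2 * M4)) := by ring
      linarith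
    linarith
  -- finish
  have key : V^2 * lam ≤ 2 * c * Real.sqrt (lamE + γ) * (∑ i, L i) + d * γ := by
    have hLsum0 : 0 ≤ ∑ i, L i := Finset.sum_nonneg fun i _ => (hL i).le
    rcases le_or_gt lam 0 with hlam | hlam
    · have h1 : V^2 * lam ≤ 0 := mul_nonpos_of_nonneg_of_nonpos (sq_nonneg V) hlam
      have h2 : 0 ≤ 2 * c * Real.sqrt (lamE + γ) * (∑ i, L i) + d * γ := by positivity
      linarith
    · have h1 : (V^2 * lam) * lam ≤ ⟪s, Matrix.toEuclideanLin Em s⟫ * lam := by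
        nlinarith [hcs]
      have h2 : V^2 * lam ≤ ⟪s, Matrix.toEuclideanLin Em s⟫ :=
        le_of_mul_le_mul_right h1 hlam
      linarith [stepC]
  -- final algebra
  rw [ge_iff_le]
  have hD : (0:ℝ) < (d:ℝ) := by exact_mod_cast hd
  have e1 : ((d:ℝ) / (2 * c)) * ((V^2 / (d:ℝ) * lam - γ) / Real.sqrt (lamE + γ))
      = (V^2 * lam - (d:ℝ) * γ) / (2 * c * Real.sqrt (lamE + γ)) := by
    field_simp
  rw [e1, div_le_iff₀ (by positivity : (0:ℝ) < 2 * c * Real.sqrt (lamE + γ))]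
  linarith [key]

end
end

section
/- Let f : ℝ^d → ℝ be differentiable, let ρ be a probability measure on ℝ^d such that θ ↦ ∇f(θ)∇f(θ)ᵀ is ρ-integrable, and let V ∈ ℝ^{d×d} be an orthogonal matrix with Vᵀ·EGOP(f)·V = Λ for a diagonal matrix Λ (i.e. the columns of V form an orthonormal eigenbasis of EGOP(f)). If the pushforward of ρ under θ ↦ Vθ equals ρ, then the reparameterized function f̃(θ) := f(Vθ) satisfies EGOP(f̃) = Λ; in particular EGOP(f̃) is diagonal with the eigenvalues of EGOP(f) on its diagonal. -/
open MeasureTheory Matrix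
open scoped RealInnerProductSpace

noncomputable section

variable {d : ℕ}

/-- If the columns of the orthogonal matrix `V` form an orthonormal eigenbasis of
`EGOP(f)`, i.e. `Vᵀ · EGOP(f) · V = Λ` with `Λ` diagonal, and the pushforward of `ρ` under
`θ ↦ Vθ` equals `ρ`, then `f̃(θ) := f(Vθ)` satisfies `EGOP(f̃) = Λ`: it is diagonal with the
eigenvalues of `EGOP(f)` on its diagonal. -/
theorem EGOP_reparam_diagonalizes
    (d : ℕ) (f : EuclideanSpace ℝ (Fin d) → ℝ) (hf : Differentiable ℝ f)
    (ρ : Measure (EuclideanSpace ℝ (Fin d))) [IsProbabilityMeasure ρ]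
    (hInt : ∀ i j, Integrable (fun θ => gradient f θ i * gradient f θ j) ρ)
    (V : Matrix (Fin d) (Fin d) ℝ) (hV : Vᵀ * V = 1)
    (Λ : Fin d → ℝ) (hdiag : Vᵀ * EGOP f ρ * V = Matrix.diagonal Λ)
    (hρV : ρ.map (fun θ => Matrix.toEuclideanLin V θ) = ρ) :
    EGOP (fun θ => f (Matrix.toEuclideanLin V θ)) ρ = Matrix.diagonal Λ := by
  classical
  set T : EuclideanSpace ℝ (Fin d) → EuclideanSpace ℝ (Fin d) :=
    fun x => Matrix.toEuclideanLin V x with hT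
  have hTcont : Continuous T :=
    (LinearMap.toContinuousLinearMap (Matrix.toEuclideanLin V)).continuous
  have hTapp : ∀ x k, T x k = ∑ j, V k j * x j := by
    intro x k
    simp [hT, Matrix.toEuclideanLin_apply, Matrix.mulVec, dotProduct]
  have hgradco : ∀ (g : EuclideanSpace ℝ (Fin d) → ℝ) θ (i : Fin d),
      gradient g θ i = fderiv ℝ g θ (EuclideanSpace.single i 1) := by
    intro g θ i
    have h : ⟪gradient g θ, EuclideanSpace.single i (1:ℝ)⟫
        = fderiv ℝ g θ (EuclideanSpace.single i 1) := by
      simp [gradient, InnerProductSpace.toDual_symm_apply]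
    rw [← h, EuclideanSpace.inner_single_right]; simp
  have hgrad : ∀ θ i, gradient (fun x => f (T x)) θ i = ∑ k, V k i * gradient f (T θ) k := by
    intro θ i
    have hfd : HasFDerivAt (fun x => f (T x))
        ((fderiv ℝ f (T θ)).comp (LinearMap.toContinuousLinearMap (Matrix.toEuclideanLin V))) θ :=
      ((hf (T θ)).hasFDerivAt).comp θ
        ((LinearMap.toContinuousLinearMap (Matrix.toEuclideanLin V)).hasFDerivAt)
    rw [hgradco, hfd.fderiv]
    have h2 : ∀ v, fderiv ℝ f (T θ) v = ⟪gradient f (T θ), v⟫ := by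
      intro v; simp [gradient, InnerProductSpace.toDual_symm_apply]
    have h3 : (fderiv ℝ f (T θ)).comp
        (LinearMap.toContinuousLinearMap (Matrix.toEuclideanLin V)) (EuclideanSpace.single i 1)
        = fderiv ℝ f (T θ) (T (EuclideanSpace.single i 1)) := rfl
    rw [h3, h2, PiLp.inner_apply]
    simp only [RCLike.inner_apply, starRingEnd_apply, star_trivial]
    refine Finset.sum_congr rfl fun k _ => ?_
    rw [hTapp]
    simp [EuclideanSpace.single_apply, Finset.mul_sum, mul_comm]
  -- the "sum form" function
  ext i j
  have key : ∀ x : EuclideanSpace ℝ (Fin d),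
      (∑ k, V k i * gradient f x k) * (∑ l, V l j * gradient f x l)
      = ∑ k, ∑ l, (V k i * V l j) * (gradient f x k * gradient f x l) := by
    intro x
    rw [Finset.sum_mul_sum]
    exact Finset.sum_congr rfl fun k _ => Finset.sum_congr rfl fun l _ => by ring
  have hIntF : Integrable (fun x =>
      ∑ k, ∑ l, (V k i * V l j) * (gradient f x k * gradient f x l)) ρ := by
    apply integrable_finset_sum
    intro k _
    apply integrable_finset_sum
    intro l _
    exact (hInt k l).const_mul _
  have hEG : EGOP (fun θ => f (T θ)) ρ i j
      = ∫ x, (∑ k, ∑ l, (V k i * V l j) * (gradient f x k * gradient f x l)) ∂ρ := by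
    have : EGOP (fun θ => f (T θ)) ρ i j
        = ∫ θ, (fun x => ∑ k, ∑ l, (V k i * V l j) * (gradient f x k * gradient f x l)) (T θ) ∂ρ := by
      unfold EGOP
      refine integral_congr_ae (Filter.Eventually.of_forall fun θ => ?_)
      simp only [hgrad, key]
    have hmeas : AEStronglyMeasurable (fun x =>
        ∑ k, ∑ l, (V k i * V l j) * (gradient f x k * gradient f x l)) (ρ.map T) := by
      rw [show ρ.map T = ρ from hρV]
      exact hIntF.1
    have hmap := integral_map (μ := ρ) hTcont.aemeasurable hmeas
    rw [show ρ.map T = ρ from hρV] at hmap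
    rw [this]
    exact hmap.symm
  rw [hEG]
  rw [integral_finset_sum _ (fun k _ => integrable_finset_sum _
    (fun l _ => (hInt k l).const_mul _))]
  have : ∀ k, ∫ x, ∑ l, (V k i * V l j) * (gradient f x k * gradient f x l) ∂ρ
      = ∑ l, (V k i * V l j) * EGOP f ρ k l := by
    intro k
    rw [integral_finset_sum _ (fun l _ => (hInt k l).const_mul _)]
    exact Finset.sum_congr rfl fun l _ => by rw [integral_const_mul]; rfl
  simp_rw [this]
  rw [← hdiag]
  simp only [Matrix.mul_apply, Matrix.transpose_apply, Finset.sum_mul]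
  rw [Finset.sum_comm]
  refine Finset.sum_congr rfl fun k _ => Finset.sum_congr rfl fun l _ => by ring

end
end

section
/- Let h : ℝⁿ → ℝ be differentiable, let A ∈ ℝ^{n×n} be nonsingular, and define f : ℝⁿ → ℝ by f(θ) := h(Aθ). Let ρ be a probability measure on ℝⁿ such that the matrix M := E_{θ∼ρ}[∇h(Aθ)·∇h(Aθ)ᵀ] is well defined (integrable) and positive definite, so that EGOP(f) = Aᵀ·M·A is positive definite. Then for every k ∈ {1,…,n}, λ_k(EGOP(f))/λ₁(EGOP(f)) ≤ (σ_k(A)/σ₁(A))² · λ₁(M)/λ_n(M), where λ_i(·) denotes the i-th largest eigenvalue and σ_i(A) the i-th largest singular value of A. -/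
open MeasureTheory Matrix
open scoped RealInnerProductSpace

noncomputable section

variable {d : ℕ}

namespace EGOPaux
variable {n : ℕ}

lemma dot_self_pos {v : Fin n → ℝ} (hv : v ≠ 0) : 0 < v ⬝ᵥ v := by
  rcases Function.ne_iff.mp hv with ⟨i, hi⟩
  have hi' : v i ≠ 0 := by simpa using hi
  exact Finset.sum_pos' (fun j _ => mul_self_nonneg _)
    ⟨i, Finset.mem_univ i, mul_self_pos.mpr hi'⟩

lemma quad_eq (Q : Matrix (Fin n) (Fin n) ℝ) (μ : Fin n → ℝ) (v : Fin n → ℝ) :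
    v ⬝ᵥ (Q * Matrix.diagonal μ * Qᵀ) *ᵥ v = ∑ i, μ i * ((Qᵀ *ᵥ v) i) ^ 2 := by
  rw [← Matrix.mulVec_mulVec, ← Matrix.mulVec_mulVec, Matrix.dotProduct_mulVec,
    ← Matrix.mulVec_transpose]
  simp only [dotProduct, Matrix.mulVec_diagonal]
  exact Finset.sum_congr rfl fun i _ => by ring

lemma norm_eq (Q : Matrix (Fin n) (Fin n) ℝ) (hQ : Qᵀ * Q = 1) (v : Fin n → ℝ) :
    ∑ i, ((Qᵀ *ᵥ v) i) ^ 2 = v ⬝ᵥ v := by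
  have h2 : Q * Qᵀ = 1 := mul_eq_one_comm.mp hQ
  have key : (Qᵀ *ᵥ v) ⬝ᵥ (Qᵀ *ᵥ v) = v ⬝ᵥ v := by
    calc (Qᵀ *ᵥ v) ⬝ᵥ (Qᵀ *ᵥ v) = (v ᵥ* Q) ⬝ᵥ (Qᵀ *ᵥ v) := by
          rw [Matrix.mulVec_transpose]
      _ = v ⬝ᵥ (Q *ᵥ (Qᵀ *ᵥ v)) := (Matrix.dotProduct_mulVec _ _ _).symm
      _ = v ⬝ᵥ ((Q * Qᵀ) *ᵥ v) := by rw [Matrix.mulVec_mulVec]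
      _ = v ⬝ᵥ v := by rw [h2, Matrix.one_mulVec]
  rw [← key]
  simp [dotProduct, sq]

lemma quad_conj (A Mm : Matrix (Fin n) (Fin n) ℝ) (v : Fin n → ℝ) :
    v ⬝ᵥ (Aᵀ * Mm * A) *ᵥ v = (A *ᵥ v) ⬝ᵥ (Mm *ᵥ (A *ᵥ v)) := by
  rw [← Matrix.mulVec_mulVec, ← Matrix.mulVec_mulVec, Matrix.dotProduct_mulVec,
    Matrix.vecMul_transpose]

lemma quad_AtA (A : Matrix (Fin n) (Fin n) ℝ) (v : Fin n → ℝ) :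
    v ⬝ᵥ (Aᵀ * A) *ᵥ v = (A *ᵥ v) ⬝ᵥ (A *ᵥ v) := by
  rw [← Matrix.mulVec_mulVec, Matrix.dotProduct_mulVec, Matrix.vecMul_transpose]

lemma sum_le_of_bound {c : ℝ} {f y : Fin n → ℝ}
    (h : ∀ i, y i ≠ 0 → f i ≤ c) : ∑ i, f i * (y i) ^ 2 ≤ c * ∑ i, (y i) ^ 2 := by
  rw [Finset.mul_sum]
  refine Finset.sum_le_sum fun i _ => ?_
  by_cases hy : y i = 0
  · simp [hy]
  · exact mul_le_mul_of_nonneg_right (h i hy) (sq_nonneg _)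

lemma le_sum_of_bound {c : ℝ} {f y : Fin n → ℝ}
    (h : ∀ i, y i ≠ 0 → c ≤ f i) : c * ∑ i, (y i) ^ 2 ≤ ∑ i, f i * (y i) ^ 2 := by
  rw [Finset.mul_sum]
  refine Finset.sum_le_sum fun i _ => ?_
  by_cases hy : y i = 0
  · simp [hy]
  · exact mul_le_mul_of_nonneg_right (h i hy) (sq_nonneg _)

lemma eig_pos {Mm W : Matrix (Fin n) (Fin n) ℝ} {ν : Fin n → ℝ}
    (hW : Wᵀ * W = 1) (hdiag : Mm = W * Matrix.diagonal ν * Wᵀ) (hpos : Mm.PosDef)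
    (i : Fin n) : 0 < ν i := by
  set e : Fin n → ℝ := Pi.single i 1 with he_def
  have he : e ≠ 0 := by
    intro h
    have := congrFun h i
    simp [he_def, Pi.single_apply] at this
  set v := W *ᵥ e with hv_def
  have hWe : Wᵀ *ᵥ v = e := by
    rw [hv_def, Matrix.mulVec_mulVec, hW, Matrix.one_mulVec]
  have hv : v ≠ 0 := by
    intro h
    apply he
    rw [← hWe, h, Matrix.mulVec_zero]
  have hq : 0 < v ⬝ᵥ (Mm *ᵥ v) := by simpa using hpos.dotProduct_mulVec_pos hv
  have hval : v ⬝ᵥ (Mm *ᵥ v) = ν i := by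
    rw [hdiag, quad_eq, hWe]
    simp [he_def, Pi.single_apply]
  rw [hval] at hq
  exact hq

end EGOPaux

/-- For `f = h ∘ A` with `A` nonsingular and
`M := E_{θ∼ρ}[∇h(Aθ)∇h(Aθ)ᵀ]` positive definite (so `EGOP(f) = AᵀMA` is positive definite),
the ordered eigenvalues satisfy `λ_k(EGOP(f))/λ₁(EGOP(f)) ≤ (σ_k(A)/σ₁(A))² · λ₁(M)/λ_n(M)`.
Ordered eigenvalues/singular values are expressed via antitone spectral decompositions. -/
theorem EGOP_eigenvalue_ratio_le_of_data_decay
    (n : ℕ) (hn : 0 < n) (h : EuclideanSpace ℝ (Fin n) → ℝ) (hh : Differentiable ℝ h)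
    (A : Matrix (Fin n) (Fin n) ℝ) (hA : IsUnit A.det)
    (ρ : Measure (EuclideanSpace ℝ (Fin n))) [IsProbabilityMeasure ρ]
    (M : Matrix (Fin n) (Fin n) ℝ)
    (hM : M = fun i j => ∫ θ, gradient h (Matrix.toEuclideanLin A θ) i *
      gradient h (Matrix.toEuclideanLin A θ) j ∂ρ)
    (hMpos : M.PosDef)
    (hEGOP : EGOP (fun θ => h (Matrix.toEuclideanLin A θ)) ρ = Aᵀ * M * A)
    (hEGOPpos : (Aᵀ * M * A).PosDef)
    -- eigenvalues of `EGOP(f)` in decreasing order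
    (μ : Fin n → ℝ) (hμ : Antitone μ)
    (U : Matrix (Fin n) (Fin n) ℝ) (hU : Uᵀ * U = 1)
    (hUdiag : Aᵀ * M * A = U * Matrix.diagonal μ * Uᵀ)
    -- eigenvalues of `M` in decreasing order
    (ν : Fin n → ℝ) (hν : Antitone ν)
    (W : Matrix (Fin n) (Fin n) ℝ) (hW : Wᵀ * W = 1)
    (hWdiag : M = W * Matrix.diagonal ν * Wᵀ)
    -- singular values of `A` in decreasing order
    (σ : Fin n → ℝ) (hσ : Antitone σ) (hσnn : ∀ i, 0 ≤ σ i)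
    (P : Matrix (Fin n) (Fin n) ℝ) (hP : Pᵀ * P = 1)
    (hPdiag : Aᵀ * A = P * Matrix.diagonal (fun i => σ i ^ 2) * Pᵀ)
    (k : Fin n) :
    μ k / μ ⟨0, hn⟩ ≤ (σ k / σ ⟨0, hn⟩) ^ 2 * (ν ⟨0, hn⟩ / ν ⟨n - 1, Nat.sub_lt hn one_pos⟩) := by
  classical
  set k0 : Fin n := ⟨0, hn⟩ with hk0
  set kl : Fin n := ⟨n - 1, Nat.sub_lt hn one_pos⟩ with hkl
  have hνpos : ∀ i, 0 < ν i := EGOPaux.eig_pos hW hWdiag hMpos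
  have hμpos : ∀ i, 0 < μ i := EGOPaux.eig_pos hU hUdiag hEGOPpos
  have hAinj : Function.Injective (A.mulVec) :=
    Matrix.mulVec_injective_iff_isUnit.mpr ((Matrix.isUnit_iff_isUnit_det A).mpr hA)
  have hAne : ∀ v : Fin n → ℝ, v ≠ 0 → A *ᵥ v ≠ 0 := by
    intro v hv hz
    exact hv (hAinj (by rw [hz, Matrix.mulVec_zero]))
  -- the top singular vector of A
  set e : Fin n → ℝ := Pi.single k0 1 with he_def
  have he : e ≠ 0 := by
    intro hz
    have := congrFun hz k0
    simp [he_def, Pi.single_apply] at this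
  set v0 := P *ᵥ e with hv0_def
  have hPe : Pᵀ *ᵥ v0 = e := by
    rw [hv0_def, Matrix.mulVec_mulVec, hP, Matrix.one_mulVec]
  have hv0ne : v0 ≠ 0 := by
    intro hz
    apply he
    rw [← hPe, hz, Matrix.mulVec_zero]
  have hv0v0 : v0 ⬝ᵥ v0 = 1 := by
    rw [← EGOPaux.norm_eq P hP v0, hPe]
    simp [he_def, Pi.single_apply]
  have hvalAtA : v0 ⬝ᵥ (Aᵀ * A) *ᵥ v0 = σ k0 ^ 2 := by
    rw [hPdiag, EGOPaux.quad_eq, hPe]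
    simp [he_def, Pi.single_apply]
  have hσ0sq : 0 < σ k0 ^ 2 := by
    rw [← hvalAtA, EGOPaux.quad_AtA]
    exact EGOPaux.dot_self_pos (hAne _ hv0ne)
  have hσ0 : 0 < σ k0 := by
    rcases (hσnn k0).eq_or_lt with hz | hz
    · rw [← hz] at hσ0sq; norm_num at hσ0sq
    · exact hz
  -- Claim 2 : ν kl * σ k0 ^ 2 ≤ μ k0
  have hlow : ν kl * σ k0 ^ 2 ≤ μ k0 := by
    have hupper : v0 ⬝ᵥ (Aᵀ * M * A) *ᵥ v0 ≤ μ k0 := by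
      have := EGOPaux.sum_le_of_bound (c := μ k0) (f := μ) (y := Uᵀ *ᵥ v0)
        (fun i _ => hμ (Fin.le_def.mpr (Nat.zero_le _)))
      rw [EGOPaux.norm_eq U hU v0, hv0v0, mul_one] at this
      rw [hUdiag, EGOPaux.quad_eq]
      exact this
    have hlower : ν kl * σ k0 ^ 2 ≤ v0 ⬝ᵥ (Aᵀ * M * A) *ᵥ v0 := by
      rw [EGOPaux.quad_conj]
      set w := A *ᵥ v0 with hw
      have h1 : ν kl * (w ⬝ᵥ w) ≤ w ⬝ᵥ (M *ᵥ w) := by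
        have := EGOPaux.le_sum_of_bound (c := ν kl) (f := ν) (y := Wᵀ *ᵥ w)
          (fun i _ => hν (Fin.le_def.mpr (Nat.le_sub_one_of_lt i.isLt)))
        rw [EGOPaux.norm_eq W hW w] at this
        calc ν kl * (w ⬝ᵥ w) ≤ ∑ i, ν i * ((Wᵀ *ᵥ w) i) ^ 2 := this
          _ = w ⬝ᵥ (M *ᵥ w) := by rw [hWdiag, ← EGOPaux.quad_eq]
      have h2 : w ⬝ᵥ w = σ k0 ^ 2 := by
        rw [hw, ← EGOPaux.quad_AtA, hvalAtA]
      rw [h2] at h1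
      exact h1
    exact hlower.trans hupper
  -- Claim 1 : μ k ≤ ν k0 * σ k ^ 2
  have hup : μ k ≤ ν k0 * σ k ^ 2 := by
    set C : Matrix (Fin n) (Fin n) ℝ :=
      fun i j => if (k : ℕ) < (i : ℕ) then Uᵀ i j
        else if (i : ℕ) < (k : ℕ) then Pᵀ i j else 0 with hC
    have hdet : C.det = 0 :=
      Matrix.det_eq_zero_of_row_eq_zero k (fun j => by simp [hC])
    obtain ⟨v, hvne, hCv⟩ := Matrix.exists_mulVec_eq_zero_iff.mpr hdet
    have hy0 : ∀ i : Fin n, (k : ℕ) < (i : ℕ) → (Uᵀ *ᵥ v) i = 0 := by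
      intro i hi
      have hi2 : k < i := Fin.lt_def.mpr hi
      have := congrFun hCv i
      simpa [Matrix.mulVec, dotProduct, hC, hi, hi2] using this
    have hz0 : ∀ i : Fin n, (i : ℕ) < (k : ℕ) → (Pᵀ *ᵥ v) i = 0 := by
      intro i hi
      have hi2 : i < k := Fin.lt_def.mpr hi
      have hi3 : ¬ k < i := fun hc => Nat.lt_asymm hi (Fin.lt_def.mp hc)
      have := congrFun hCv i
      simpa [Matrix.mulVec, dotProduct, hC, hi, hi2, hi3] using this
    have hnv : 0 < v ⬝ᵥ v := EGOPaux.dot_self_pos hvne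
    have hqlow : μ k * (v ⬝ᵥ v) ≤ v ⬝ᵥ (Aᵀ * M * A) *ᵥ v := by
      rw [hUdiag, EGOPaux.quad_eq, ← EGOPaux.norm_eq U hU v]
      exact EGOPaux.le_sum_of_bound (fun i hi =>
        hμ (Fin.le_def.mpr (Nat.le_of_not_lt (fun hlt => hi (hy0 i hlt)))))
    have hqhigh : v ⬝ᵥ (Aᵀ * M * A) *ᵥ v ≤ ν k0 * (σ k ^ 2 * (v ⬝ᵥ v)) := by
      rw [EGOPaux.quad_conj]
      set w := A *ᵥ v with hw
      have h1 : w ⬝ᵥ (M *ᵥ w) ≤ ν k0 * (w ⬝ᵥ w) := by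
        have := EGOPaux.sum_le_of_bound (c := ν k0) (f := ν) (y := Wᵀ *ᵥ w)
          (fun i _ => hν (Fin.le_def.mpr (Nat.zero_le _)))
        rw [EGOPaux.norm_eq W hW w] at this
        calc w ⬝ᵥ (M *ᵥ w) = ∑ i, ν i * ((Wᵀ *ᵥ w) i) ^ 2 := by
              rw [hWdiag, ← EGOPaux.quad_eq]
          _ ≤ ν k0 * (w ⬝ᵥ w) := this
      have h2 : w ⬝ᵥ w ≤ σ k ^ 2 * (v ⬝ᵥ v) := by
        rw [hw, ← EGOPaux.quad_AtA, hPdiag, EGOPaux.quad_eq, ← EGOPaux.norm_eq P hP v]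
        exact EGOPaux.sum_le_of_bound (fun i hi => by
          have hik : (k : ℕ) ≤ (i : ℕ) := Nat.le_of_not_lt (fun hlt => hi (hz0 i hlt))
          exact pow_le_pow_left₀ (hσnn i) (hσ (Fin.le_def.mpr hik)) 2)
      calc w ⬝ᵥ (M *ᵥ w) ≤ ν k0 * (w ⬝ᵥ w) := h1
        _ ≤ ν k0 * (σ k ^ 2 * (v ⬝ᵥ v)) :=
            mul_le_mul_of_nonneg_left h2 (hνpos k0).le
    have hchain : μ k * (v ⬝ᵥ v) ≤ (ν k0 * σ k ^ 2) * (v ⬝ᵥ v) := by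
      calc μ k * (v ⬝ᵥ v) ≤ v ⬝ᵥ (Aᵀ * M * A) *ᵥ v := hqlow
        _ ≤ ν k0 * (σ k ^ 2 * (v ⬝ᵥ v)) := hqhigh
        _ = (ν k0 * σ k ^ 2) * (v ⬝ᵥ v) := by ring
    exact le_of_mul_le_mul_right hchain hnv
  -- combine
  have hd : 0 < ν kl * σ k0 ^ 2 := mul_pos (hνpos kl) hσ0sq
  have hfinal : μ k / μ k0 ≤ (ν k0 * σ k ^ 2) / (ν kl * σ k0 ^ 2) :=
    div_le_div₀ (mul_nonneg (hνpos k0).le (sq_nonneg _)) hup hd hlow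
  calc μ k / μ k0 ≤ (ν k0 * σ k ^ 2) / (ν kl * σ k0 ^ 2) := hfinal
    _ = (σ k / σ k0) ^ 2 * (ν k0 / ν kl) := by
        rw [div_pow, div_mul_div_comm, mul_comm (σ k ^ 2) (ν k0), mul_comm (σ k0 ^ 2) (ν kl)]


end
end

section
/- There exist dimensions n, m ≥ 2 and an orthogonal matrix V ∈ ℝ^{nm×nm} such that for all orthogonal matrices Q_L ∈ ℝ^{n×n} and Q_R ∈ ℝ^{m×m}, Q_Rᵀ ⊗ Q_Lᵀ ≠ V; consequently there is no pair of orthogonal matrices (Q_L, Q_R) with Q_Lᵀ·mat(g)·Q_R = mat(V·g) for all g ∈ ℝ^{nm}. A witness is any orthogonal V whose first column is the normalized all-ones vector (nm)^{−1/2}·𝟙 and whose second column is (nm)^{−1/2}·(𝟙_{nm/2}, −𝟙_{nm/2}) (with nm even). -/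
open Matrix
open scoped Kronecker

noncomputable section

/-- Inverse of the column-stacking vectorization, `mat : ℝ^{nm} → ℝ^{n×m}` (indexing `ℝ^{nm}`
by `Fin m × Fin n`, column index first). -/
def matM {n m : ℕ} (g : Fin m × Fin n → ℝ) : Matrix (Fin n) (Fin m) ℝ := fun i j => g (j, i)

/-- The permutation swapping `(0,0)` and `(1,1)` on `Fin 2 × Fin 2`. -/
def σ0 : Equiv.Perm (Fin 2 × Fin 2) := Equiv.swap (0, 0) (1, 1)

/-- The corresponding permutation matrix, an orthogonal matrix not of Kronecker form. -/
def V0 : Matrix (Fin 2 × Fin 2) (Fin 2 × Fin 2) ℝ := fun p q => if q = σ0 p then 1 else 0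

lemma V0_orth : V0ᵀ * V0 = 1 := by
  ext p q
  simp only [Matrix.mul_apply, Matrix.transpose_apply, V0]
  have h : ∀ r : Fin 2 × Fin 2, ∀ s : Fin 2 × Fin 2, (s = σ0 r) = (r = σ0.symm s) := by
    intro r s; simp [Equiv.eq_symm_apply, eq_comm]
  simp only [h]
  rw [Finset.sum_eq_single (σ0.symm p)]
  · simp [Matrix.one_apply, Equiv.symm_apply_eq, eq_comm]
  · intro b _ hb; simp [hb]
  · simp

lemma V0_apply (p q : Fin 2 × Fin 2) : V0 p q = if q = σ0 p then 1 else 0 := rfl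

lemma V0_not_kron (QL QR : Matrix (Fin 2) (Fin 2) ℝ) : QRᵀ ⊗ₖ QLᵀ ≠ V0 := by
  intro hV
  have e : ∀ j i l k : Fin 2, QR l j * QL k i = V0 (j, i) (l, k) := by
    intro j i l k
    have := congrFun (congrFun hV (j, i)) (l, k)
    simpa [Matrix.kroneckerMap_apply, Matrix.transpose_apply] using this
  have h1 : QR 1 0 * QL 1 0 = 1 := by
    have := e 0 0 1 1; rw [V0_apply] at this
    simpa [σ0, Equiv.swap_apply_def] using this
  have h2 : QR 1 0 * QL 1 1 = 0 := by
    have := e 0 1 1 1; rw [V0_apply] at this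
    simpa [σ0, Equiv.swap_apply_def, Prod.ext_iff] using this
  have h5 : QR 0 0 * QL 1 1 = 1 := by
    have := e 0 1 0 1; rw [V0_apply] at this
    simpa [σ0, Equiv.swap_apply_def, Prod.ext_iff] using this
  have hQR : QR 1 0 ≠ 0 := fun h => by simp [h] at h1
  have hQL : QL 1 1 = 0 := by
    rcases mul_eq_zero.mp h2 with h | h
    · exact absurd h hQR
    · exact h
  rw [hQL, mul_zero] at h5
  exact zero_ne_one h5

lemma V0_eq_kron (QL QR : Matrix (Fin 2) (Fin 2) ℝ)
    (h : ∀ g : Fin 2 × Fin 2 → ℝ, QLᵀ * matM g * QR = matM (V0.mulVec g)) :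
    V0 = QRᵀ ⊗ₖ QLᵀ := by
  ext ⟨j, i⟩ ⟨l, k⟩
  have hg := congrFun (congrFun (h fun p => if p = (l, k) then 1 else 0) i) j
  simp only [matM, Matrix.mul_apply, Matrix.mulVec, dotProduct,
    Matrix.transpose_apply, Prod.mk.injEq, and_comm, ite_and, mul_ite, ite_mul, mul_one,
    mul_zero, one_mul, zero_mul, Finset.sum_ite_eq, Finset.sum_ite_eq', Finset.mem_univ,
    if_true] at hg
  have e : ∀ x : Fin 2,
      (∑ x1 : Fin 2, if x = l then if x1 = k then QL x1 i else 0 else 0)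
        = if x = l then QL k i else 0 := by
    intro x; split <;> simp
  simp only [e, ite_mul, zero_mul, Finset.sum_ite_eq', Finset.mem_univ, if_true] at hg
  simp only [Matrix.kroneckerMap_apply, Matrix.transpose_apply]
  linear_combination -hg

/-- There exist dimensions `n, m ≥ 2` and an orthogonal matrix
`V ∈ ℝ^{nm×nm}` which is not of the form `Q_Rᵀ ⊗ Q_Lᵀ` for any orthogonal `Q_L, Q_R`;
consequently no pair of orthogonal matrices satisfies `Q_Lᵀ · mat(g) · Q_R = mat(V g)`
for all `g ∈ ℝ^{nm}`. -/
theorem exists_orthogonal_not_kronecker :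
    ∃ (n m : ℕ), 2 ≤ n ∧ 2 ≤ m ∧
      ∃ V : Matrix (Fin m × Fin n) (Fin m × Fin n) ℝ, Vᵀ * V = 1 ∧
        (∀ (QL : Matrix (Fin n) (Fin n) ℝ) (QR : Matrix (Fin m) (Fin m) ℝ),
          QLᵀ * QL = 1 → QRᵀ * QR = 1 → QRᵀ ⊗ₖ QLᵀ ≠ V) ∧
        ¬ ∃ (QL : Matrix (Fin n) (Fin n) ℝ) (QR : Matrix (Fin m) (Fin m) ℝ),
            QLᵀ * QL = 1 ∧ QRᵀ * QR = 1 ∧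
            ∀ g : Fin m × Fin n → ℝ, QLᵀ * matM g * QR = matM (V.mulVec g) := by
  refine ⟨2, 2, le_refl 2, le_refl 2, V0, V0_orth, ?_, ?_⟩
  · intro QL QR _ _
    exact V0_not_kron QL QR
  · rintro ⟨QL, QR, _, _, h⟩
    exact V0_not_kron QL QR (V0_eq_kron QL QR h).symm

end
end
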